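/- arXiv:2102.12526 — 3 statements merged into one kernel-verified Lean document; each statement's English description precedes it below -/
import Mathlib

section
/- Let A be a finite nonempty set, K, M positive integers, ψ : A → ℝ^K, and let ρ₁ ≥ ρ₂ ≥ … ≥ ρ_K > 0 with Λ = diag(ρ₁,…,ρ_K) and σ > 0. For a tuple P = (p₁,…,p_m) ∈ A^m let Ψ(P) ∈ ℝ^{m×K} be the matrix whose i-th row is ψ(p_i)ᵀ, let Γ(P) = Ψ(P) Λ Ψ(P)ᵀ + σ² I_m, and define the design objective g(P) = trace(Λ Ψ(P)ᵀ Γ(P)⁻¹ Ψ(P) Λ). Suppose the greedy sequence p̂₁, p̂₂, … is constructed so that at each step m, p̂_m maximizes p ↦ g(p̂₁,…,p̂_{m−1}, p) over p ∈ A. Let λ*_ψ = max_{p∈A} ‖ψ(p)‖² (equivalently, the maximum over p ∈ A of the largest eigenvalue of the rank-one matrix ψ(p)ψ(p)ᵀ). Then for every m with 1 ≤ m ≤ M, g(p̂₁,…,p̂_m) ≥ [1 − exp( −((1/ρ₁) / ((1/ρ_K) + (m/σ²) λ*_ψ)) · (m/M) )] · max_{P ∈ A^M} g(P). -/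
open Matrix

section Helpers
variable {K : ℕ}



/-- quadratic form nonneg for real PSD -/
lemma psd_quad {A : Matrix (Fin K) (Fin K) ℝ} (hA : A.PosSemidef) (x : Fin K → ℝ) :
    0 ≤ x ⬝ᵥ A *ᵥ x := by
  simpa using hA.dotProduct_mulVec_nonneg x

lemma pd_quad {A : Matrix (Fin K) (Fin K) ℝ} (hA : A.PosDef) {x : Fin K → ℝ} (hx : x ≠ 0) :
    0 < x ⬝ᵥ A *ᵥ x := by
  simpa using hA.dotProduct_mulVec_pos hx

lemma herm_transpose {A : Matrix (Fin K) (Fin K) ℝ} (hA : A.IsHermitian) : Aᵀ = A := by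
  rw [← conjTranspose_eq_transpose_of_trivial]; exact hA

lemma psd_trace_nonneg {A : Matrix (Fin K) (Fin K) ℝ} (hA : A.PosSemidef) : 0 ≤ A.trace := by
  have h : ∀ i, 0 ≤ A i i := by
    intro i
    have := psd_quad hA (Pi.single i 1)
    simpa [dotProduct, mulVec, Pi.single_apply, Finset.sum_ite_eq', Finset.mul_sum] using this
  exact Finset.sum_nonneg fun i _ => h i

lemma psd_smul {A : Matrix (Fin K) (Fin K) ℝ} (hA : A.PosSemidef) {c : ℝ} (hc : 0 ≤ c) : (c • A).PosSemidef := by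
  refine Matrix.PosSemidef.of_dotProduct_mulVec_nonneg ?_ ?_
  · unfold Matrix.IsHermitian
    rw [conjTranspose_smul, hA.1]
    simp
  · intro x
    have := hA.dotProduct_mulVec_nonneg x
    simp only [smul_mulVec, dotProduct_smul]
    exact smul_nonneg hc this


noncomputable def outer (v : Fin K → ℝ) : Matrix (Fin K) (Fin K) ℝ := Matrix.vecMulVec v v

lemma outer_apply (v : Fin K → ℝ) (i j : Fin K) : outer v i j = v i * v j := rfl

lemma outer_posSemidef (v : Fin K → ℝ) : (outer v).PosSemidef := by
  refine Matrix.PosSemidef.of_dotProduct_mulVec_nonneg ?_ ?_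
  · ext i j
    simp [outer, vecMulVec, mul_comm]
  · intro x
    have : star x ⬝ᵥ (outer v) *ᵥ x = (v ⬝ᵥ x) * (v ⬝ᵥ x) := by
      simp [outer, vecMulVec, mulVec, dotProduct, Finset.mul_sum, Finset.sum_mul]
      rw [Finset.sum_comm]
      congr 1; ext i; congr 1; ext j; ring
    rw [this]
    exact mul_self_nonneg _

lemma outer_trace (v : Fin K → ℝ) : (outer v).trace = v ⬝ᵥ v := by
  simp [trace, outer, vecMulVec, dotProduct, diag]

lemma mul_outer_eq (M : Matrix (Fin K) (Fin K) ℝ) (u : Fin K → ℝ) :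
    M * outer u = vecMulVec (M *ᵥ u) u := by
  ext i j
  simp [outer, vecMulVec, mul_apply, mulVec, dotProduct, Finset.sum_mul]
  congr 1; ext k; ring

lemma outer_mul_eq (M : Matrix (Fin K) (Fin K) ℝ) (hM : Mᵀ = M) (w : Fin K → ℝ) :
    outer w * M = vecMulVec w (M *ᵥ w) := by
  ext i j
  simp [outer, vecMulVec, mul_apply, mulVec, dotProduct, Finset.mul_sum]
  congr 1; ext k
  rw [show M j k = Mᵀ k j from rfl, hM]
  ring

lemma outer_mul_outer (w u : Fin K → ℝ) :
    outer w * outer u = (w ⬝ᵥ u) • vecMulVec w u := by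
  ext i j
  simp [outer, vecMulVec, mul_apply, dotProduct, Finset.sum_mul, Finset.mul_sum]
  congr 1; ext k; ring



lemma pd_det_isUnit {A : Matrix (Fin K) (Fin K) ℝ} (hA : A.PosDef) : IsUnit A.det :=
  hA.det_pos.ne'.isUnit

lemma pd_mul_inv {A : Matrix (Fin K) (Fin K) ℝ} (hA : A.PosDef) : A * A⁻¹ = 1 :=
  Matrix.mul_nonsing_inv A (pd_det_isUnit hA)

lemma pd_inv_mul {A : Matrix (Fin K) (Fin K) ℝ} (hA : A.PosDef) : A⁻¹ * A = 1 :=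
  Matrix.nonsing_inv_mul A (pd_det_isUnit hA)

lemma inv_transpose_of_pd {A : Matrix (Fin K) (Fin K) ℝ} (hA : A.PosDef) : (A⁻¹)ᵀ = A⁻¹ := by
  have := hA.inv.isHermitian
  rw [← conjTranspose_eq_transpose_of_trivial]; exact this

/-- Key identity: `A⁻¹ - (A+D)⁻¹` is positive semidefinite for `A` posdef, `D` PSD. -/
lemma inv_sub_inv_psd {A D : Matrix (Fin K) (Fin K) ℝ} (hA : A.PosDef) (hD : D.PosSemidef) :
    (A⁻¹ - (A + D)⁻¹).PosSemidef := by
  set B := A + D with hB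
  have hBpd : B.PosDef := hA.add_posSemidef hD
  have hDh : Dᴴ = D := hD.isHermitian
  have e1 : A * A⁻¹ = 1 := pd_mul_inv hA
  have e2 : A⁻¹ * A = 1 := pd_inv_mul hA
  have h1 : B * A⁻¹ * B = B + (D + D * A⁻¹ * D) := by
    have expand : B * A⁻¹ * B = A * A⁻¹ * A + A * A⁻¹ * D + D * (A⁻¹ * A) + D * A⁻¹ * D := by
      rw [hB]; noncomm_ring
    rw [expand, e1, e2, Matrix.one_mul, Matrix.one_mul, Matrix.mul_one, hB]
    noncomm_ring
  have h2 : B⁻¹ * (B * A⁻¹ * B) * B⁻¹ = A⁻¹ := by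
    rw [show B * A⁻¹ * B = B * (A⁻¹ * B) from Matrix.mul_assoc _ _ _,
      show B⁻¹ * (B * (A⁻¹ * B)) = (B⁻¹ * B) * (A⁻¹ * B) from (Matrix.mul_assoc _ _ _).symm,
      pd_inv_mul hBpd, Matrix.one_mul, Matrix.mul_assoc, pd_mul_inv hBpd, Matrix.mul_one]
  rw [h1] at h2
  have h3 : A⁻¹ = B⁻¹ + (B⁻¹ * D * B⁻¹ + B⁻¹ * (D * A⁻¹ * D) * B⁻¹) := by
    conv_lhs => rw [← h2]
    have hexp : B⁻¹ * (B + (D + D * A⁻¹ * D)) * B⁻¹ =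
        B⁻¹ * B * B⁻¹ + (B⁻¹ * D * B⁻¹ + B⁻¹ * (D * A⁻¹ * D) * B⁻¹) := by noncomm_ring
    rw [hexp, pd_inv_mul hBpd, Matrix.one_mul]
  have h4 : A⁻¹ - B⁻¹ = B⁻¹ * D * B⁻¹ + B⁻¹ * (D * A⁻¹ * D) * B⁻¹ := by
    nth_rewrite 1 [h3]; abel
  rw [h4]
  have hBinvH : (B⁻¹)ᴴ = B⁻¹ := hBpd.inv.isHermitian
  have p1 : (B⁻¹ * D * B⁻¹).PosSemidef := by
    have := hD.mul_mul_conjTranspose_same B⁻¹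
    rwa [hBinvH] at this
  have p2 : (B⁻¹ * (D * A⁻¹ * D) * B⁻¹).PosSemidef := by
    have inner : (D * A⁻¹ * D).PosSemidef := by
      have := hA.inv.posSemidef.conjTranspose_mul_mul_same D
      rwa [hDh] at this
    have := inner.mul_mul_conjTranspose_same B⁻¹
    rwa [hBinvH] at this
  exact p1.add p2

/-- trace of inverse decreases when adding a PSD matrix -/
lemma trace_inv_anti {A D : Matrix (Fin K) (Fin K) ℝ} (hA : A.PosDef) (hD : D.PosSemidef)
    (htr : ∀ {X : Matrix (Fin K) (Fin K) ℝ}, X.PosSemidef → 0 ≤ X.trace) :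
    ((A + D)⁻¹).trace ≤ (A⁻¹).trace := by
  have := htr (inv_sub_inv_psd hA hD)
  rw [Matrix.trace_sub] at this
  linarith

/-- Sherman–Morrison: inverse of a rank-one update. -/
lemma sherman_morrison {M : Matrix (Fin K) (Fin K) ℝ} (hM : M.PosDef) (c : ℝ) (w : Fin K → ℝ)
    (hden : 1 + c * (w ⬝ᵥ M⁻¹ *ᵥ w) ≠ 0) :
    (M + c • outer w)⁻¹ =
      M⁻¹ - (c / (1 + c * (w ⬝ᵥ M⁻¹ *ᵥ w))) • outer (M⁻¹ *ᵥ w) := by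
  set u := M⁻¹ *ᵥ w with hu
  set q := w ⬝ᵥ u with hq
  set d := c / (1 + c * q) with hd
  apply Matrix.inv_eq_right_inv
  have hMu : M *ᵥ u = w := by
    rw [hu, Matrix.mulVec_mulVec, pd_mul_inv hM, Matrix.one_mulVec]
  have h1 : M * outer u = vecMulVec w u := by rw [mul_outer_eq, hMu]
  have h2 : outer w * M⁻¹ = vecMulVec w u := by
    rw [outer_mul_eq M⁻¹ (inv_transpose_of_pd hM), hu]
  have h3 : outer w * outer u = q • vecMulVec w u := by
    rw [outer_mul_outer, hq]
  have expand : (M + c • outer w) * (M⁻¹ - d • outer u) =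
      M * M⁻¹ - d • (M * outer u) + c • (outer w * M⁻¹) - (c * d) • (outer w * outer u) := by
    rw [Matrix.add_mul, Matrix.mul_sub, Matrix.mul_sub, Matrix.smul_mul, Matrix.mul_smul,
      Matrix.mul_smul, Matrix.smul_mul, smul_smul]
    module
  rw [expand, pd_mul_inv hM, h1, h2, h3, smul_smul]
  have key : (1 : Matrix (Fin K) (Fin K) ℝ) - d • vecMulVec w u + c • vecMulVec w u
      - (c * d * q) • vecMulVec w u
      = 1 + (c - (d + c * d * q)) • vecMulVec w u := by
    rw [sub_smul, add_smul]; abel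
  have hsc : c - (d + c * d * q) = 0 := by
    rw [hd]; field_simp; ring
  rw [key, hsc, zero_smul, add_zero]

lemma outer_quad (v x : Fin K → ℝ) : x ⬝ᵥ (outer v) *ᵥ x = (v ⬝ᵥ x) ^ 2 := by
  have : x ⬝ᵥ (outer v) *ᵥ x = (v ⬝ᵥ x) * (v ⬝ᵥ x) := by
    simp [outer, vecMulVec, mulVec, dotProduct, Finset.mul_sum, Finset.sum_mul]
    rw [Finset.sum_comm]
    congr 1; ext i; congr 1; ext j; ring
  rw [this, sq]

lemma diagonal_quad (d : Fin K → ℝ) (x : Fin K → ℝ) :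
    x ⬝ᵥ (diagonal d) *ᵥ x = ∑ k, d k * x k ^ 2 := by
  simp [dotProduct, mulVec_diagonal]
  congr 1; ext k; ring

/-- trace gain formula for a rank-one update -/
lemma trace_gain {M : Matrix (Fin K) (Fin K) ℝ} (hM : M.PosDef) {c : ℝ} (hc : 0 ≤ c)
    (w : Fin K → ℝ) :
    M⁻¹.trace - (M + c • outer w)⁻¹.trace
      = (c / (1 + c * (w ⬝ᵥ M⁻¹ *ᵥ w))) * ((M⁻¹ *ᵥ w) ⬝ᵥ (M⁻¹ *ᵥ w)) := by
  have hq : 0 ≤ w ⬝ᵥ M⁻¹ *ᵥ w := psd_quad hM.inv.posSemidef w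
  have hden : 1 + c * (w ⬝ᵥ M⁻¹ *ᵥ w) ≠ 0 := by positivity
  rw [sherman_morrison hM c w hden, Matrix.trace_sub, Matrix.trace_smul, outer_trace]
  simp [smul_eq_mul]

lemma quad_pos_den {M : Matrix (Fin K) (Fin K) ℝ} (hM : M.PosDef) {c : ℝ} (hc : 0 ≤ c)
    (w : Fin K → ℝ) : (0:ℝ) < 1 + c * (w ⬝ᵥ M⁻¹ *ᵥ w) := by
  have hq : 0 ≤ w ⬝ᵥ M⁻¹ *ᵥ w := psd_quad hM.inv.posSemidef w
  positivity

/-- Lower bound on the rank-one gain. -/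
lemma gain_lower {M : Matrix (Fin K) (Fin K) ℝ} (hM : M.PosDef) {c L lam : ℝ}
    (hc : 0 ≤ c) (hL : 0 < L) (hlam : 0 ≤ lam)
    {w : Fin K → ℝ} (hwlam : w ⬝ᵥ w ≤ lam)
    (hLq : ∀ x, x ⬝ᵥ M *ᵥ x ≤ L * (x ⬝ᵥ x)) :
    c * (w ⬝ᵥ M⁻¹ *ᵥ w) / (L + c * lam) ≤ M⁻¹.trace - (M + c • outer w)⁻¹.trace := by
  rw [trace_gain hM hc w]
  set u := M⁻¹ *ᵥ w with hu
  set q := w ⬝ᵥ u with hq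
  have hq0 : 0 ≤ q := psd_quad hM.inv.posSemidef w
  have hMu : M *ᵥ u = w := by
    rw [hu, Matrix.mulVec_mulVec, pd_mul_inv hM, Matrix.one_mulVec]
  have hqM : q = u ⬝ᵥ M *ᵥ u := by rw [hq, hMu, dotProduct_comm]
  have huu : 0 ≤ u ⬝ᵥ u := by
    simp [dotProduct]
    exact Finset.sum_nonneg fun i _ => mul_self_nonneg _
  have h1 : q ≤ L * (u ⬝ᵥ u) := by rw [hqM]; exact hLq u
  have h2 : q ^ 2 ≤ lam * (u ⬝ᵥ u) := by
    have cs : (w ⬝ᵥ u) ^ 2 ≤ (w ⬝ᵥ w) * (u ⬝ᵥ u) := by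
      have := Finset.sum_mul_sq_le_sq_mul_sq Finset.univ w u
      simpa [dotProduct, sq] using this
    calc q ^ 2 ≤ (w ⬝ᵥ w) * (u ⬝ᵥ u) := by rw [hq]; exact cs
      _ ≤ lam * (u ⬝ᵥ u) := by apply mul_le_mul_of_nonneg_right hwlam huu
  have hden : (0:ℝ) < 1 + c * q := by positivity
  have hLlam : (0:ℝ) < L + c * lam := by positivity
  rw [div_mul_eq_mul_div, div_le_div_iff₀ hLlam hden]
  nlinarith [mul_nonneg hc (sub_nonneg.2 h1), mul_nonneg (sq_nonneg c) (sub_nonneg.2 h2)]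

/-- Upper bound on the rank-one gain at an enlarged matrix. -/
lemma gain_upper {M0 D : Matrix (Fin K) (Fin K) ℝ} (hM0 : M0.PosDef) (hD : D.PosSemidef)
    {c l : ℝ} (hc : 0 ≤ c) (hl : 0 < l)
    (hlq : ∀ x, l * (x ⬝ᵥ x) ≤ x ⬝ᵥ M0 *ᵥ x)
    (w : Fin K → ℝ) :
    (M0 + D)⁻¹.trace - ((M0 + D) + c • outer w)⁻¹.trace
      ≤ (c / l) * (w ⬝ᵥ M0⁻¹ *ᵥ w) := by
  set M := M0 + D with hMdef
  have hM : M.PosDef := hM0.add_posSemidef hD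
  rw [trace_gain hM hc w]
  set u := M⁻¹ *ᵥ w with hu
  set q := w ⬝ᵥ u with hq
  have hq0 : 0 ≤ q := psd_quad hM.inv.posSemidef w
  have hMu : M *ᵥ u = w := by
    rw [hu, Matrix.mulVec_mulVec, pd_mul_inv hM, Matrix.one_mulVec]
  have hqM : q = u ⬝ᵥ M *ᵥ u := by rw [hq, hMu, dotProduct_comm]
  have huu : 0 ≤ u ⬝ᵥ u := by
    simp [dotProduct]
    exact Finset.sum_nonneg fun i _ => mul_self_nonneg _
  have hul : l * (u ⬝ᵥ u) ≤ q := by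
    rw [hqM]
    calc l * (u ⬝ᵥ u) ≤ u ⬝ᵥ M0 *ᵥ u := hlq u
      _ ≤ u ⬝ᵥ M *ᵥ u := by
          rw [hMdef, add_mulVec, dotProduct_add]
          have := psd_quad hD u
          linarith
  have hqmono : q ≤ w ⬝ᵥ M0⁻¹ *ᵥ w := by
    have hpsd := inv_sub_inv_psd hM0 hD
    have := psd_quad hpsd w
    rw [sub_mulVec, dotProduct_sub] at this
    rw [hq, hu]
    rw [← hMdef] at this
    linarith
  have hden : (0:ℝ) < 1 + c * q := by positivity
  calc (c / (1 + c * q)) * (u ⬝ᵥ u) ≤ c * (u ⬝ᵥ u) := by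
        apply mul_le_mul_of_nonneg_right _ huu
        rw [div_le_iff₀ hden]
        nlinarith [mul_nonneg hc (mul_nonneg hc hq0), huu]
    _ ≤ (c / l) * q := by
        rw [div_mul_eq_mul_div, le_div_iff₀ hl, mul_comm (c * (u ⬝ᵥ u)) l]
        calc l * (c * (u ⬝ᵥ u)) = c * (l * (u ⬝ᵥ u)) := by ring
          _ ≤ c * q := mul_le_mul_of_nonneg_left hul hc
    _ ≤ (c / l) * (w ⬝ᵥ M0⁻¹ *ᵥ w) := by
        apply mul_le_mul_of_nonneg_left hqmono
        positivity

lemma psd_sum_outer {n : ℕ} (v : Fin n → Fin K → ℝ) :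
    (∑ i, outer (v i)).PosSemidef := by
  induction n with
  | zero => simp; exact Matrix.PosSemidef.zero
  | succ n ih =>
      rw [Fin.sum_univ_castSucc]
      exact (ih _).add (outer_posSemidef _)

/-- Telescoping bound: total gain from adding many rank-one terms. -/
lemma telescope_bound {M0 : Matrix (Fin K) (Fin K) ℝ} (hM0 : M0.PosDef)
    {c l : ℝ} (hc : 0 ≤ c) (hl : 0 < l)
    (hlq : ∀ x, l * (x ⬝ᵥ x) ≤ x ⬝ᵥ M0 *ᵥ x)
    {n : ℕ} (v : Fin n → Fin K → ℝ) :
    M0⁻¹.trace - (M0 + c • ∑ i, outer (v i))⁻¹.trace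
      ≤ (c / l) * ∑ i, v i ⬝ᵥ M0⁻¹ *ᵥ (v i) := by
  induction n with
  | zero => simp
  | succ n ih =>
      have hstep := gain_upper hM0 (psd_smul (psd_sum_outer (fun i : Fin n => v i.castSucc)) hc)
        hc hl hlq (v (Fin.last n))
      rw [Fin.sum_univ_castSucc, Fin.sum_univ_castSucc, smul_add, ← add_assoc]
      calc M0⁻¹.trace - (M0 + c • ∑ i : Fin n, outer (v i.castSucc) + c • outer (v (Fin.last n)))⁻¹.trace
          = (M0⁻¹.trace - (M0 + c • ∑ i : Fin n, outer (v i.castSucc))⁻¹.trace)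
            + ((M0 + c • ∑ i : Fin n, outer (v i.castSucc))⁻¹.trace
              - (M0 + c • ∑ i : Fin n, outer (v i.castSucc) + c • outer (v (Fin.last n)))⁻¹.trace) := by ring
        _ ≤ (c / l) * (∑ i : Fin n, v i.castSucc ⬝ᵥ M0⁻¹ *ᵥ (v i.castSucc))
            + (c / l) * (v (Fin.last n) ⬝ᵥ M0⁻¹ *ᵥ (v (Fin.last n))) := by
            apply add_le_add (ih _) hstep
        _ = (c / l) * (∑ i : Fin n, v i.castSucc ⬝ᵥ M0⁻¹ *ᵥ (v i.castSucc)
              + v (Fin.last n) ⬝ᵥ M0⁻¹ *ᵥ (v (Fin.last n))) := by ring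

lemma quad_sum {n : ℕ} (Ms : Fin n → Matrix (Fin K) (Fin K) ℝ) (x : Fin K → ℝ) :
    x ⬝ᵥ (∑ i, Ms i) *ᵥ x = ∑ i, x ⬝ᵥ (Ms i) *ᵥ x := by
  induction n with
  | zero => simp
  | succ n ih =>
      rw [Fin.sum_univ_castSucc, Fin.sum_univ_castSucc, Matrix.add_mulVec, dotProduct_add, ih]

lemma dot_self_eq_sum_sq (x : Fin K → ℝ) : x ⬝ᵥ x = ∑ k, x k ^ 2 := by
  simp [dotProduct, sq]

lemma dot_self_nonneg (x : Fin K → ℝ) : 0 ≤ x ⬝ᵥ x := by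
  rw [dot_self_eq_sum_sq]
  exact Finset.sum_nonneg fun i _ => sq_nonneg _

/-- trace of inverse is monotone (decreasing) under PSD additions. -/
lemma trace_inv_mono {A D : Matrix (Fin K) (Fin K) ℝ} (hA : A.PosDef) (hD : D.PosSemidef) :
    ((A + D)⁻¹).trace ≤ (A⁻¹).trace := by
  have := psd_trace_nonneg (inv_sub_inv_psd hA hD)
  rw [Matrix.trace_sub] at this
  linarith

end Helpers

/-- The design objective `g(P) = trace(Λ Ψ(P)ᵀ (Ψ(P) Λ Ψ(P)ᵀ + σ² I)⁻¹ Ψ(P) Λ)` for a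
tuple of sampling directions `P : Fin m → A`, where the `i`-th row of `Ψ(P)` is `ψ (P i)`. -/
noncomputable def designObj {A : Type*} (K : ℕ) (ψ : A → Fin K → ℝ) (ρ : Fin K → ℝ)
    (σ : ℝ) (m : ℕ) (P : Fin m → A) : ℝ :=
  Matrix.trace
    (Matrix.diagonal ρ * (Matrix.of fun i k => ψ (P i) k)ᵀ *
      ((Matrix.of fun i k => ψ (P i) k) * Matrix.diagonal ρ *
          (Matrix.of fun i k => ψ (P i) k)ᵀ + σ ^ 2 • 1)⁻¹ *
      (Matrix.of fun i k => ψ (P i) k) * Matrix.diagonal ρ)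

section Woodbury

variable {α : Type*} {K : ℕ}

/-- The information matrix of a design. -/
noncomputable def infoM (K : ℕ) (ψ : α → Fin K → ℝ) (ρ : Fin K → ℝ) (σ : ℝ)
    (n : ℕ) (P : Fin n → α) : Matrix (Fin K) (Fin K) ℝ :=
  Matrix.diagonal (fun k => (ρ k)⁻¹) + (σ ^ 2)⁻¹ • ∑ i, outer (ψ (P i))

lemma infoM_posDef (ψ : α → Fin K → ℝ) {ρ : Fin K → ℝ} (hρ : ∀ k, 0 < ρ k)
    {σ : ℝ} (hσ : 0 < σ) (n : ℕ) (P : Fin n → α) :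
    (infoM K ψ ρ σ n P).PosDef := by
  have h1 : (Matrix.diagonal (fun k => (ρ k)⁻¹)).PosDef :=
    Matrix.posDef_diagonal_iff.mpr fun k => inv_pos.2 (hρ k)
  have h2 : ((σ ^ 2)⁻¹ • ∑ i, outer (ψ (P i))).PosSemidef :=
    psd_smul (psd_sum_outer _) (by positivity)
  exact h1.add_posSemidef h2

lemma designObj_eq_infoM (ψ : α → Fin K → ℝ) {ρ : Fin K → ℝ} (hρ : ∀ k, 0 < ρ k)
    {σ : ℝ} (hσ : 0 < σ) (n : ℕ) (P : Fin n → α) :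
    designObj K ψ ρ σ n P = (∑ k, ρ k) - (infoM K ψ ρ σ n P)⁻¹.trace := by
  set Ψ : Matrix (Fin n) (Fin K) ℝ := Matrix.of fun i k => ψ (P i) k with hΨ
  set Λ : Matrix (Fin K) (Fin K) ℝ := Matrix.diagonal ρ with hΛ
  set Λ' : Matrix (Fin K) (Fin K) ℝ := Matrix.diagonal (fun k => (ρ k)⁻¹) with hΛ'
  set c : ℝ := (σ ^ 2)⁻¹ with hc
  have hcpos : 0 < c := by positivity
  set Γ : Matrix (Fin n) (Fin n) ℝ := Ψ * Λ * Ψᵀ + σ ^ 2 • 1 with hΓ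
  have hΨΨ : Ψᵀ * Ψ = ∑ i, outer (ψ (P i)) := by
    ext k l
    simp [Matrix.mul_apply, Matrix.transpose_apply, outer, vecMulVec, hΨ, Matrix.sum_apply]
  have hMM : infoM K ψ ρ σ n P = Λ' + c • (Ψᵀ * Ψ) := by
    rw [infoM, hΨΨ]
  have hMpd : (infoM K ψ ρ σ n P).PosDef := infoM_posDef ψ hρ hσ n P
  set Mm : Matrix (Fin K) (Fin K) ℝ := infoM K ψ ρ σ n P with hMm
  have hΓpd : Γ.PosDef := by
    have hpsd : (Ψ * Λ * Ψᵀ).PosSemidef := by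
      have := (Matrix.PosSemidef.diagonal (fun k => (hρ k).le : 0 ≤ ρ)).mul_mul_conjTranspose_same Ψ
      rwa [conjTranspose_eq_transpose_of_trivial] at this
    have hone : (σ ^ 2 • (1 : Matrix (Fin n) (Fin n) ℝ)).PosDef := by
      rw [Matrix.smul_one_eq_diagonal]
      exact Matrix.posDef_diagonal_iff.mpr fun k => by positivity
    exact Matrix.PosDef.posSemidef_add hpsd hone
  have hΛ'Λ : Λ' * Λ = 1 := by
    rw [hΛ', hΛ, Matrix.diagonal_mul_diagonal]
    rw [show (fun k => (ρ k)⁻¹ * ρ k) = fun _ => (1:ℝ) by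
      ext k; exact inv_mul_cancel₀ (hρ k).ne']
    exact Matrix.diagonal_one
  have hkey : Mm * Λ * Ψᵀ = c • (Ψᵀ * Γ) := by
    have lhs : Mm * Λ * Ψᵀ = Ψᵀ + c • (Ψᵀ * Ψ * Λ * Ψᵀ) := by
      rw [hMM, Matrix.add_mul, Matrix.add_mul, Matrix.smul_mul, Matrix.smul_mul,
        hΛ'Λ, Matrix.one_mul]
    have rhs : c • (Ψᵀ * Γ) = Ψᵀ + c • (Ψᵀ * Ψ * Λ * Ψᵀ) := by
      rw [hΓ, Matrix.mul_add, smul_add, Matrix.mul_smul, Matrix.mul_one, smul_smul,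
        hc, inv_mul_cancel₀ (by positivity : (σ:ℝ) ^ 2 ≠ 0), one_smul]
      rw [show Ψᵀ * (Ψ * Λ * Ψᵀ) = Ψᵀ * Ψ * Λ * Ψᵀ by
        rw [Matrix.mul_assoc (Ψᵀ * Ψ), Matrix.mul_assoc Ψᵀ, Matrix.mul_assoc Ψ]]
      exact add_comm _ _
    rw [lhs, rhs]
  have hstep : Λ * Ψᵀ * Γ⁻¹ = c • (Mm⁻¹ * Ψᵀ) := by
    have h0 : Λ * Ψᵀ = Mm⁻¹ * (c • (Ψᵀ * Γ)) := by
      rw [← hkey, ← Matrix.mul_assoc, ← Matrix.mul_assoc, pd_inv_mul hMpd, Matrix.one_mul]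
    rw [h0, Matrix.mul_smul, Matrix.smul_mul, Matrix.mul_assoc (Mm⁻¹), Matrix.mul_assoc Ψᵀ,
      pd_mul_inv hΓpd, Matrix.mul_one]
  have hfinal : Λ * Ψᵀ * Γ⁻¹ * Ψ * Λ = Λ - Mm⁻¹ := by
    rw [hstep, Matrix.smul_mul, Matrix.smul_mul, Matrix.mul_assoc Mm⁻¹ Ψᵀ Ψ,
      ← Matrix.smul_mul, ← Matrix.mul_smul, hΨΨ]
    have : c • ∑ i, outer (ψ (P i)) = Mm - Λ' := by rw [hMm, infoM]; abel
    rw [this, Matrix.mul_sub, Matrix.sub_mul, pd_inv_mul hMpd, Matrix.one_mul,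
      Matrix.mul_assoc, hΛ'Λ, Matrix.mul_one]
  have : designObj K ψ ρ σ n P = (Λ * Ψᵀ * Γ⁻¹ * Ψ * Λ).trace := rfl
  rw [this, hfinal, Matrix.trace_sub, Matrix.trace_diagonal]

end Woodbury

section Main

variable {A : Type*} {K : ℕ}

/-- Lower quadratic-form bound for any information matrix. -/
lemma infoM_quad_lower (ψ : A → Fin K → ℝ) {ρ : Fin K → ℝ} (hρ : ∀ k, 0 < ρ k)
    {σ : ℝ} (hσ : 0 < σ) {ρ0 : ℝ} (hρ0 : 0 < ρ0) (hmax : ∀ k, ρ k ≤ ρ0)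
    (n : ℕ) (P : Fin n → A) (x : Fin K → ℝ) :
    ρ0⁻¹ * (x ⬝ᵥ x) ≤ x ⬝ᵥ (infoM K ψ ρ σ n P) *ᵥ x := by
  rw [infoM, Matrix.add_mulVec, dotProduct_add]
  have h1 : ρ0⁻¹ * (x ⬝ᵥ x) ≤ x ⬝ᵥ (Matrix.diagonal fun k => (ρ k)⁻¹) *ᵥ x := by
    rw [diagonal_quad, dot_self_eq_sum_sq, Finset.mul_sum]
    apply Finset.sum_le_sum
    intro k _
    apply mul_le_mul_of_nonneg_right _ (sq_nonneg _)
    exact inv_anti₀ (hρ k) (hmax k)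
  have h2 : 0 ≤ x ⬝ᵥ ((σ ^ 2)⁻¹ • ∑ i, outer (ψ (P i))) *ᵥ x :=
    psd_quad (psd_smul (psd_sum_outer _) (by positivity)) x
  linarith

/-- Upper quadratic-form bound for an information matrix with `n` rows. -/
lemma infoM_quad_upper (ψ : A → Fin K → ℝ) {ρ : Fin K → ℝ} (hρ : ∀ k, 0 < ρ k)
    {σ : ℝ} (hσ : 0 < σ) {ρK lam : ℝ} (hρK : 0 < ρK) (hmin : ∀ k, ρK ≤ ρ k)
    (hlam : ∀ p, (ψ p) ⬝ᵥ (ψ p) ≤ lam)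
    (n : ℕ) (P : Fin n → A) (x : Fin K → ℝ) :
    x ⬝ᵥ (infoM K ψ ρ σ n P) *ᵥ x ≤ (ρK⁻¹ + (σ ^ 2)⁻¹ * (n : ℝ) * lam) * (x ⬝ᵥ x) := by
  rw [infoM, Matrix.add_mulVec, dotProduct_add]
  have h1 : x ⬝ᵥ (Matrix.diagonal fun k => (ρ k)⁻¹) *ᵥ x ≤ ρK⁻¹ * (x ⬝ᵥ x) := by
    rw [diagonal_quad, dot_self_eq_sum_sq, Finset.mul_sum]
    apply Finset.sum_le_sum
    intro k _
    apply mul_le_mul_of_nonneg_right _ (sq_nonneg _)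
    exact inv_anti₀ hρK (hmin k)
  have h2 : x ⬝ᵥ ((σ ^ 2)⁻¹ • ∑ i, outer (ψ (P i))) *ᵥ x
      ≤ (σ ^ 2)⁻¹ * (n : ℝ) * lam * (x ⬝ᵥ x) := by
    rw [smul_mulVec, dotProduct_smul, smul_eq_mul, quad_sum]
    have hterm : ∀ i : Fin n, x ⬝ᵥ (outer (ψ (P i))) *ᵥ x ≤ lam * (x ⬝ᵥ x) := by
      intro i
      rw [outer_quad]
      have cs : (ψ (P i) ⬝ᵥ x) ^ 2 ≤ (ψ (P i) ⬝ᵥ ψ (P i)) * (x ⬝ᵥ x) := by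
        have := Finset.sum_mul_sq_le_sq_mul_sq Finset.univ (ψ (P i)) x
        simpa [dotProduct, sq] using this
      calc (ψ (P i) ⬝ᵥ x) ^ 2 ≤ (ψ (P i) ⬝ᵥ ψ (P i)) * (x ⬝ᵥ x) := cs
        _ ≤ lam * (x ⬝ᵥ x) := mul_le_mul_of_nonneg_right (hlam _) (dot_self_nonneg x)
    calc (σ ^ 2)⁻¹ * ∑ i, x ⬝ᵥ (outer (ψ (P i))) *ᵥ x
        ≤ (σ ^ 2)⁻¹ * ∑ _i : Fin n, lam * (x ⬝ᵥ x) := by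
          apply mul_le_mul_of_nonneg_left (Finset.sum_le_sum fun i _ => hterm i) (by positivity)
      _ = (σ ^ 2)⁻¹ * (n : ℝ) * lam * (x ⬝ᵥ x) := by
          rw [Finset.sum_const, Finset.card_univ, Fintype.card_fin, nsmul_eq_mul]
          ring
  linarith

end Main

/-- Theorem 1: performance bound for the greedy q-space design selection algorithm. -/
theorem greedy_design_selection_bound
    {A : Type*} [Fintype A] [Nonempty A]
    {K M : ℕ} (hK : 0 < K) (hM : 0 < M)
    (ψ : A → Fin K → ℝ) (ρ : Fin K → ℝ)
    (hρ_anti : Antitone ρ) (hρ_pos : ∀ k, 0 < ρ k)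
    (σ : ℝ) (hσ : 0 < σ)
    (phat : ℕ → A)
    (hgreedy : ∀ (m : ℕ) (p : A),
      designObj K ψ ρ σ (m + 1) (Fin.snoc (fun i : Fin m => phat i) p) ≤
        designObj K ψ ρ σ (m + 1) (Fin.snoc (fun i : Fin m => phat i) (phat m)))
    (lamψ : ℝ)
    (hlam : lamψ = Finset.univ.sup' Finset.univ_nonempty fun p : A => ∑ k, ψ p k ^ 2)
    (m : ℕ) (hm1 : 1 ≤ m) (hmM : m ≤ M) :
    (1 - Real.exp (-((1 / ρ ⟨0, hK⟩) /
            (1 / ρ ⟨K - 1, Nat.sub_lt hK one_pos⟩ + ((m : ℝ) / σ ^ 2) * lamψ)) *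
          ((m : ℝ) / (M : ℝ)))) *
        (Finset.univ.sup' Finset.univ_nonempty fun Q : Fin M → A => designObj K ψ ρ σ M Q) ≤
      designObj K ψ ρ σ m fun i : Fin m => phat i := by
  classical
  set c : ℝ := (σ ^ 2)⁻¹ with hc
  have hcpos : 0 < c := by positivity
  have hlam_ge : ∀ p : A, (ψ p) ⬝ᵥ (ψ p) ≤ lamψ := by
    intro p
    rw [hlam, dot_self_eq_sum_sq]
    exact Finset.le_sup' (fun p : A => ∑ k, ψ p k ^ 2) (Finset.mem_univ p)
  have hlam0 : 0 ≤ lamψ := by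
    obtain ⟨p⟩ := (inferInstance : Nonempty A)
    exact le_trans (dot_self_nonneg (ψ p)) (hlam_ge p)
  set ρ0 : ℝ := ρ ⟨0, hK⟩ with hρ0def
  set ρK : ℝ := ρ ⟨K - 1, Nat.sub_lt hK one_pos⟩ with hρKdef
  have hρ0pos : 0 < ρ0 := hρ_pos _
  have hρKpos : 0 < ρK := hρ_pos _
  have hρ0max : ∀ k, ρ k ≤ ρ0 := fun k => hρ_anti (by exact Fin.mk_le_mk.mpr (Nat.zero_le _))
  have hρKmin : ∀ k, ρK ≤ ρ k := fun k =>
    hρ_anti (by exact Fin.mk_le_mk.mpr (Nat.le_sub_one_of_lt k.isLt))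
  set l : ℝ := ρ0⁻¹ with hldef
  have hlpos : 0 < l := by positivity
  set Lbar : ℝ := ρK⁻¹ + c * (m : ℝ) * lamψ with hLbardef
  have hLbarpos : 0 < Lbar := by
    have : 0 ≤ c * (m : ℝ) * lamψ := by positivity
    have : 0 < ρK⁻¹ := by positivity
    rw [hLbardef]; linarith [mul_nonneg (mul_nonneg hcpos.le (Nat.cast_nonneg m)) hlam0]
  have hlLbar : l ≤ Lbar := by
    have h1 : ρ0⁻¹ ≤ ρK⁻¹ := inv_anti₀ hρKpos (le_trans (hρKmin ⟨0, hK⟩) (hρ0max ⟨0, hK⟩))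
    have h2 : 0 ≤ c * (m : ℝ) * lamψ :=
      mul_nonneg (mul_nonneg hcpos.le (Nat.cast_nonneg m)) hlam0
    rw [hldef, hLbardef]; linarith
  set gd : ℕ → ℝ :=
    fun j => (∑ k, ρ k) - (infoM K ψ ρ σ j (fun i : Fin j => phat ↑i))⁻¹.trace with hgd
  have hgdeq : ∀ j : ℕ, designObj K ψ ρ σ j (fun i : Fin j => phat ↑i) = gd j :=
    fun j => designObj_eq_infoM ψ hρ_pos hσ j _
  have hΛ'inv : (Matrix.diagonal (fun k : Fin K => (ρ k)⁻¹))⁻¹ = Matrix.diagonal ρ := by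
    apply Matrix.inv_eq_right_inv
    rw [Matrix.diagonal_mul_diagonal,
      show (fun k => (ρ k)⁻¹ * ρ k) = fun _ => (1:ℝ) from
        funext fun k => inv_mul_cancel₀ (hρ_pos k).ne']
    exact Matrix.diagonal_one
  have hgd0 : gd 0 = 0 := by
    rw [hgd]
    simp only [infoM, Finset.univ_eq_empty, Finset.sum_empty, smul_zero, add_zero, hΛ'inv,
      Matrix.trace_diagonal]
    ring
  -- every design value is at most ∑ ρ and at least matches via traces
  have htrace_le : ∀ (n : ℕ) (P : Fin n → A),
      (infoM K ψ ρ σ n P)⁻¹.trace ≤ ∑ k, ρ k := by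
    intro n P
    have hΛ'pd : (Matrix.diagonal (fun k : Fin K => (ρ k)⁻¹)).PosDef :=
      Matrix.posDef_diagonal_iff.mpr fun k => inv_pos.2 (hρ_pos k)
    have := trace_inv_mono hΛ'pd (psd_smul (psd_sum_outer (fun i : Fin n => ψ (P i)))
      (le_of_lt hcpos))
    rw [hΛ'inv, Matrix.trace_diagonal] at this
    exact le_trans (le_of_eq (by rw [infoM])) this
  set gmax : ℝ :=
    Finset.univ.sup' Finset.univ_nonempty (fun Q : Fin M → A => designObj K ψ ρ σ M Q)
    with hgmaxdef
  obtain ⟨Q, _, hQ⟩ := Finset.exists_mem_eq_sup'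
    (s := (Finset.univ : Finset (Fin M → A))) Finset.univ_nonempty
    (fun Q : Fin M → A => designObj K ψ ρ σ M Q)
  have hQval : gmax = (∑ k, ρ k) - (infoM K ψ ρ σ M Q)⁻¹.trace := by
    rw [hgmaxdef, hQ, designObj_eq_infoM ψ hρ_pos hσ]
  have hgmax0 : 0 ≤ gmax := by
    rw [hQval]
    linarith [htrace_le M Q]
  set γ : ℝ := l / ((M : ℝ) * Lbar) with hγdef
  have hMpos : (0:ℝ) < (M:ℝ) := by exact_mod_cast hM
  have hγpos : 0 < γ := by positivity
  have hγ1 : γ ≤ 1 := by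
    rw [hγdef, div_le_one (by positivity)]
    calc l ≤ Lbar := hlLbar
      _ = 1 * Lbar := (one_mul _).symm
      _ ≤ (M : ℝ) * Lbar := by
          apply mul_le_mul_of_nonneg_right _ hLbarpos.le
          exact_mod_cast hM
  -- snoc identity
  have hsnoc : ∀ (j : ℕ) (p : A),
      infoM K ψ ρ σ (j + 1) (Fin.snoc (fun i : Fin j => phat ↑i) p)
        = infoM K ψ ρ σ j (fun i : Fin j => phat ↑i) + c • outer (ψ p) := by
    intro j p
    rw [infoM, infoM, Fin.sum_univ_castSucc]
    simp only [Fin.snoc_castSucc, Fin.snoc_last]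
    rw [smul_add]
    abel
  have hphat_succ : ∀ j : ℕ,
      (Fin.snoc (fun i : Fin j => phat ↑i) (phat j) : Fin (j + 1) → A)
        = fun i : Fin (j + 1) => phat ↑i := by
    intro j; funext i
    refine Fin.lastCases ?_ ?_ i
    · simp
    · intro i; simp
  -- main per-step inequality
  have hstep : ∀ j, j < m → γ * (gmax - gd j) ≤ gd (j + 1) - gd j := by
    intro j hj
    set Mj : Matrix (Fin K) (Fin K) ℝ := infoM K ψ ρ σ j (fun i : Fin j => phat ↑i) with hMjdef
    have hMjpd : Mj.PosDef := infoM_posDef ψ hρ_pos hσ j _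
    have hgdj : gd j = (∑ k, ρ k) - Mj⁻¹.trace := rfl
    set Lj : ℝ := ρK⁻¹ + c * (j : ℝ) * lamψ with hLjdef
    have hLjpos : 0 < Lj := by
      have h2 : 0 ≤ c * (j : ℝ) * lamψ :=
        mul_nonneg (mul_nonneg hcpos.le (Nat.cast_nonneg j)) hlam0
      have : 0 < ρK⁻¹ := by positivity
      rw [hLjdef]; linarith
    have hLjLbar : Lj + c * lamψ ≤ Lbar := by
      rw [hLjdef, hLbardef]
      have hj1 : (j : ℝ) + 1 ≤ (m : ℝ) := by exact_mod_cast hj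
      nlinarith [mul_nonneg hcpos.le hlam0]
    have hup : ∀ x, x ⬝ᵥ Mj *ᵥ x ≤ Lj * (x ⬝ᵥ x) := by
      intro x
      rw [hMjdef, hLjdef]
      exact infoM_quad_upper ψ hρ_pos hσ hρKpos hρKmin hlam_ge j _ x
    have hlow : ∀ x, l * (x ⬝ᵥ x) ≤ x ⬝ᵥ Mj *ᵥ x := by
      intro x
      rw [hMjdef, hldef]
      exact infoM_quad_lower ψ hρ_pos hσ hρ0pos hρ0max j _ x
    -- per-candidate bound
    have hper : ∀ p : A, c * (ψ p ⬝ᵥ Mj⁻¹ *ᵥ ψ p) ≤ Lbar * (gd (j + 1) - gd j) := by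
      intro p
      have hgl := gain_lower hMjpd hcpos.le hLjpos hlam0 (hlam_ge p) hup
      have e1 : designObj K ψ ρ σ (j + 1) (Fin.snoc (fun i : Fin j => phat ↑i) p)
          = (∑ k, ρ k) - (Mj + c • outer (ψ p))⁻¹.trace := by
        rw [designObj_eq_infoM ψ hρ_pos hσ, hsnoc j p]
      have e2 : designObj K ψ ρ σ (j + 1) (Fin.snoc (fun i : Fin j => phat ↑i) (phat j))
          = gd (j + 1) := by
        rw [hphat_succ j]; exact hgdeq (j + 1)
      have hgr := hgreedy j p
      rw [e1, e2] at hgr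
      -- so the rank-one gain is at most the greedy gain
      have hgain_le : Mj⁻¹.trace - (Mj + c • outer (ψ p))⁻¹.trace ≤ gd (j + 1) - gd j := by
        rw [hgdj]; linarith
      have hq0 : 0 ≤ ψ p ⬝ᵥ Mj⁻¹ *ᵥ ψ p := psd_quad hMjpd.inv.posSemidef (ψ p)
      have hgain_ge : c * (ψ p ⬝ᵥ Mj⁻¹ *ᵥ ψ p) / (Lj + c * lamψ) ≤ gd (j + 1) - gd j :=
        le_trans hgl hgain_le
      have hdelta0 : 0 ≤ gd (j + 1) - gd j := by
        refine le_trans ?_ hgain_ge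
        positivity
      have hden : 0 < Lj + c * lamψ := by positivity
      calc c * (ψ p ⬝ᵥ Mj⁻¹ *ᵥ ψ p) ≤ (Lj + c * lamψ) * (gd (j + 1) - gd j) := by
            rw [div_le_iff₀ hden] at hgain_ge
            linarith
        _ ≤ Lbar * (gd (j + 1) - gd j) := mul_le_mul_of_nonneg_right hLjLbar hdelta0
    -- telescope with the optimal design
    set SQ : Matrix (Fin K) (Fin K) ℝ := ∑ i : Fin M, outer (ψ (Q i)) with hSQdef
    have hcomb : Mj + c • SQ
        = infoM K ψ ρ σ M Q + c • ∑ i : Fin j, outer (ψ (phat ↑i)) := by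
      rw [hMjdef, hSQdef, infoM, infoM]
      abel
    have hmono : (Mj + c • SQ)⁻¹.trace ≤ (infoM K ψ ρ σ M Q)⁻¹.trace := by
      rw [hcomb]
      exact trace_inv_mono (infoM_posDef ψ hρ_pos hσ M Q)
        (psd_smul (psd_sum_outer _) hcpos.le)
    have htel := telescope_bound hMjpd hcpos.le hlpos hlow (fun i : Fin M => ψ (Q i))
    rw [← hSQdef] at htel
    have h1 : gmax - gd j ≤ (c / l) * ∑ i : Fin M, ψ (Q i) ⬝ᵥ Mj⁻¹ *ᵥ ψ (Q i) := by
      have h0 : gmax - gd j ≤ Mj⁻¹.trace - (Mj + c • SQ)⁻¹.trace := by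
        rw [hQval, hgdj]
        linarith
      exact le_trans h0 htel
    have h2 : (c / l) * ∑ i : Fin M, ψ (Q i) ⬝ᵥ Mj⁻¹ *ᵥ ψ (Q i)
        ≤ (1 / l) * ((M : ℝ) * (Lbar * (gd (j + 1) - gd j))) := by
      have hsum : ∑ i : Fin M, c * (ψ (Q i) ⬝ᵥ Mj⁻¹ *ᵥ ψ (Q i))
          ≤ (M : ℝ) * (Lbar * (gd (j + 1) - gd j)) := by
        calc ∑ i : Fin M, c * (ψ (Q i) ⬝ᵥ Mj⁻¹ *ᵥ ψ (Q i))
            ≤ ∑ _i : Fin M, Lbar * (gd (j + 1) - gd j) :=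
              Finset.sum_le_sum fun i _ => hper (Q i)
          _ = (M : ℝ) * (Lbar * (gd (j + 1) - gd j)) := by
              rw [Finset.sum_const, Finset.card_univ, Fintype.card_fin, nsmul_eq_mul]
      have : (c / l) * ∑ i : Fin M, ψ (Q i) ⬝ᵥ Mj⁻¹ *ᵥ ψ (Q i)
          = (1 / l) * ∑ i : Fin M, c * (ψ (Q i) ⬝ᵥ Mj⁻¹ *ᵥ ψ (Q i)) := by
        rw [Finset.mul_sum, Finset.mul_sum]
        congr 1; funext i; ring
      rw [this]
      apply mul_le_mul_of_nonneg_left hsum (by positivity)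
    have h3 : gmax - gd j ≤ (1 / l) * ((M : ℝ) * (Lbar * (gd (j + 1) - gd j))) :=
      le_trans h1 h2
    have hγval : γ * ((1 / l) * ((M : ℝ) * (Lbar * (gd (j + 1) - gd j)))) = gd (j + 1) - gd j := by
      rw [hγdef]
      field_simp
    calc γ * (gmax - gd j) ≤ γ * ((1 / l) * ((M : ℝ) * (Lbar * (gd (j + 1) - gd j)))) :=
          mul_le_mul_of_nonneg_left h3 hγpos.le
      _ = gd (j + 1) - gd j := hγval
  -- recursion
  have hrec : ∀ j, j < m → gmax - gd (j + 1) ≤ (1 - γ) * (gmax - gd j) := by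
    intro j hj
    have h := hstep j hj
    have hx : (1 - γ) * (gmax - gd j) = (gmax - gd j) - γ * (gmax - gd j) := by ring
    rw [hx]
    linarith
  have hiter : ∀ j, j ≤ m → gmax - gd j ≤ (1 - γ) ^ j * gmax := by
    intro j
    induction j with
    | zero => intro _; rw [hgd0]; simp
    | succ j ih =>
        intro hj
        have hj' : j < m := Nat.lt_of_succ_le hj
        calc gmax - gd (j + 1) ≤ (1 - γ) * (gmax - gd j) := hrec j hj'
          _ ≤ (1 - γ) * ((1 - γ) ^ j * gmax) :=
              mul_le_mul_of_nonneg_left (ih hj'.le) (by linarith)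
          _ = (1 - γ) ^ (j + 1) * gmax := by ring
  have hexp : (1 - γ) ^ m ≤ Real.exp (-(γ * (m : ℝ))) := by
    have h1 : (0:ℝ) ≤ 1 - γ := by linarith
    have h2 : 1 - γ ≤ Real.exp (-γ) := by
      have := Real.add_one_le_exp (-γ)
      linarith
    calc (1 - γ) ^ m ≤ (Real.exp (-γ)) ^ m := pow_le_pow_left₀ h1 h2 m
      _ = Real.exp (-(γ * (m : ℝ))) := by
          rw [← Real.exp_nat_mul]
          congr 1; ring
  have hfinal : gmax - gd m ≤ Real.exp (-(γ * (m : ℝ))) * gmax :=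
    le_trans (hiter m le_rfl) (mul_le_mul_of_nonneg_right hexp hgmax0)
  have hexpeq : -((1 / ρ ⟨0, hK⟩) /
        (1 / ρ ⟨K - 1, Nat.sub_lt hK one_pos⟩ + ((m : ℝ) / σ ^ 2) * lamψ)) *
      ((m : ℝ) / (M : ℝ)) = -(γ * (m : ℝ)) := by
    rw [hγdef, hldef, hLbardef, hρ0def, hρKdef, hc]
    rw [one_div, one_div]
    rw [div_eq_mul_inv (m:ℝ) (σ^2)]
    have hMne : ((M:ℝ)) ≠ 0 := hMpos.ne'
    have hLbarne : (ρ ⟨K - 1, Nat.sub_lt hK one_pos⟩)⁻¹ + (σ^2)⁻¹ * (m:ℝ) * lamψ ≠ 0 := by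
      have := hLbarpos
      rw [hLbardef, hρKdef, hc] at this
      exact this.ne'
    field_simp
  rw [hgdeq m, hexpeq]
  have hx : (1 - Real.exp (-(γ * (m:ℝ)))) * gmax = gmax - Real.exp (-(γ * (m:ℝ))) * gmax := by
    ring
  rw [hx]
  linarith [hfinal]
end

section
/- Let (Ω, μ) be a measure space and ψ₁,…,ψ_K : Ω → ℝ measurable functions that are orthonormal in L²(μ), i.e., ∫ ψ_j ψ_k dμ = δ_{jk}. Let Λ = diag(ρ₁,…,ρ_K) with ρ_k ≥ 0 and σ > 0. Let ξ be a random vector in ℝ^K with mean 0 and covariance matrix Λ, let ε be a random vector in ℝ^M with mean 0 and covariance σ² I_M, uncorrelated with ξ, and let s = m + Ψξ + ε for a fixed vector m ∈ ℝ^M and fixed matrix Ψ ∈ ℝ^{M×K}. Set Γ = ΨΛΨᵀ + σ² I_M and A* = ΛΨᵀΓ⁻¹. Define the random functions X(p) = μ₀(p) + Σ_{k=1}^K ξ_k ψ_k(p) and X̃(p) = μ₀(p) + Σ_{k=1}^K (A*(s − m))_k ψ_k(p), where μ₀ ∈ L²(μ) is a fixed function. Then the expected integrated squared error satisfies E[ ∫_Ω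 (X(p) − X̃(p))² dμ(p) ] = trace(Λ) − trace(ΛΨᵀΓ⁻¹ΨΛ). -/
open Matrix MeasureTheory

lemma inner_int {Ω : Type*} [MeasurableSpace Ω] (μ : Measure Ω)
    {K : ℕ} (ψ : Fin K → Ω → ℝ)
    (hψint : ∀ j k, Integrable (fun p => ψ j p * ψ k p) μ)
    (hψortho : ∀ j k, ∫ p, ψ j p * ψ k p ∂μ = if j = k then (1 : ℝ) else 0)
    (c : Fin K → ℝ) :
    ∫ p, (∑ k, c k * ψ k p) ^ 2 ∂μ = ∑ k, c k ^ 2 := by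
  have h1 : ∀ p, (∑ k, c k * ψ k p) ^ 2
      = ∑ j, ∑ k, (c j * c k) * (ψ j p * ψ k p) := by
    intro p
    rw [sq, Finset.sum_mul_sum]
    exact Finset.sum_congr rfl fun j _ => Finset.sum_congr rfl fun k _ => by ring
  simp_rw [h1]
  rw [integral_finset_sum _ fun j _ =>
    integrable_finset_sum _ fun k _ => (hψint j k).const_mul _]
  have h2 : ∀ j, ∫ p, ∑ k, (c j * c k) * (ψ j p * ψ k p) ∂μ = c j ^ 2 := by
    intro j
    rw [integral_finset_sum _ fun k _ => (hψint j k).const_mul _]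
    have : ∀ k, ∫ p, (c j * c k) * (ψ j p * ψ k p) ∂μ
        = (c j * c k) * (if j = k then (1:ℝ) else 0) := by
      intro k; rw [integral_const_mul, hψortho]
    simp [this, mul_ite, Finset.sum_ite_eq, sq]
  simp [h2]

lemma second_moment {Ω' : Type*} [MeasurableSpace Ω'] (P : Measure Ω')
    {K M : ℕ} (ρ : Fin K → ℝ) (σ : ℝ)
    (ξ : Ω' → Fin K → ℝ) (ε : Ω' → Fin M → ℝ)
    (hξint : ∀ j k, Integrable (fun ω => ξ ω j * ξ ω k) P)
    (hεint : ∀ i j, Integrable (fun ω => ε ω i * ε ω j) P)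
    (hξεint : ∀ k i, Integrable (fun ω => ξ ω k * ε ω i) P)
    (hξcov : ∀ j k, ∫ ω, ξ ω j * ξ ω k ∂P = Matrix.diagonal ρ j k)
    (hεcov : ∀ i j, ∫ ω, ε ω i * ε ω j ∂P = if i = j then σ ^ 2 else 0)
    (hξε : ∀ k i, ∫ ω, ξ ω k * ε ω i ∂P = 0)
    (d : Fin K → ℝ) (e : Fin M → ℝ) :
    Integrable (fun ω => (∑ j, d j * ξ ω j + ∑ i, e i * ε ω i) ^ 2) P ∧
    ∫ ω, (∑ j, d j * ξ ω j + ∑ i, e i * ε ω i) ^ 2 ∂P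
      = (∑ j, d j ^ 2 * ρ j) + σ ^ 2 * ∑ i, e i ^ 2 := by
  have hpt : ∀ ω, (∑ j, d j * ξ ω j + ∑ i, e i * ε ω i) ^ 2
      = (∑ j, ∑ j', (d j * d j') * (ξ ω j * ξ ω j'))
        + ((∑ j, ∑ i, (2 * (d j * e i)) * (ξ ω j * ε ω i))
          + (∑ i, ∑ i', (e i * e i') * (ε ω i * ε ω i'))) := by
    intro ω
    have e1 : (∑ j, d j * ξ ω j) * (∑ j', d j' * ξ ω j')
        = ∑ j, ∑ j', (d j * d j') * (ξ ω j * ξ ω j') := by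
      rw [Finset.sum_mul_sum]
      exact Finset.sum_congr rfl fun j _ => Finset.sum_congr rfl fun j' _ => by ring
    have e2 : (∑ j, d j * ξ ω j) * (∑ i, e i * ε ω i)
        = ∑ j, ∑ i, (d j * e i) * (ξ ω j * ε ω i) := by
      rw [Finset.sum_mul_sum]
      exact Finset.sum_congr rfl fun j _ => Finset.sum_congr rfl fun i _ => by ring
    have e3 : (∑ i, e i * ε ω i) * (∑ i', e i' * ε ω i')
        = ∑ i, ∑ i', (e i * e i') * (ε ω i * ε ω i') := by
      rw [Finset.sum_mul_sum]
      exact Finset.sum_congr rfl fun i _ => Finset.sum_congr rfl fun i' _ => by ring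
    have e2' : ∑ j, ∑ i, (2 * (d j * e i)) * (ξ ω j * ε ω i)
        = 2 * ((∑ j, d j * ξ ω j) * (∑ i, e i * ε ω i)) := by
      rw [e2, Finset.mul_sum]
      refine Finset.sum_congr rfl fun j _ => ?_
      rw [Finset.mul_sum]
      exact Finset.sum_congr rfl fun i _ => by ring
    linear_combination e1 - e2' + e3
  have I1 : Integrable (fun ω => ∑ j, ∑ j', (d j * d j') * (ξ ω j * ξ ω j')) P :=
    integrable_finset_sum _ fun j _ =>
      integrable_finset_sum _ fun j' _ => (hξint j j').const_mul _
  have I2 : Integrable (fun ω => ∑ j, ∑ i, (2 * (d j * e i)) * (ξ ω j * ε ω i)) P :=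
    integrable_finset_sum _ fun j _ =>
      integrable_finset_sum _ fun i _ => (hξεint j i).const_mul _
  have I3 : Integrable (fun ω => ∑ i, ∑ i', (e i * e i') * (ε ω i * ε ω i')) P :=
    integrable_finset_sum _ fun i _ =>
      integrable_finset_sum _ fun i' _ => (hεint i i').const_mul _
  have I23 : Integrable (fun ω => (∑ j, ∑ i, (2 * (d j * e i)) * (ξ ω j * ε ω i))
      + (∑ i, ∑ i', (e i * e i') * (ε ω i * ε ω i'))) P := I2.add I3
  have I123 : Integrable (fun ω => (∑ j, ∑ j', (d j * d j') * (ξ ω j * ξ ω j'))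
      + ((∑ j, ∑ i, (2 * (d j * e i)) * (ξ ω j * ε ω i))
        + (∑ i, ∑ i', (e i * e i') * (ε ω i * ε ω i')))) P := I1.add I23
  constructor
  · exact I123.congr (ae_of_all _ fun ω => (hpt ω).symm)
  · simp_rw [hpt]
    rw [integral_add I1 I23, integral_add I2 I3]
    have J1 : ∫ ω, ∑ j, ∑ j', (d j * d j') * (ξ ω j * ξ ω j') ∂P = ∑ j, d j ^ 2 * ρ j := by
      rw [integral_finset_sum _ fun j _ =>
        integrable_finset_sum _ fun j' _ => (hξint j j').const_mul _]
      refine Finset.sum_congr rfl fun j _ => ?_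
      rw [integral_finset_sum _ fun j' _ => (hξint j j').const_mul _]
      have : ∀ j', ∫ ω, (d j * d j') * (ξ ω j * ξ ω j') ∂P
          = (d j * d j') * Matrix.diagonal ρ j j' := by
        intro j'; rw [integral_const_mul, hξcov]
      simp [this, Matrix.diagonal, mul_ite, Finset.sum_ite_eq, sq]
    have J2 : ∫ ω, ∑ j, ∑ i, (2 * (d j * e i)) * (ξ ω j * ε ω i) ∂P = 0 := by
      rw [integral_finset_sum _ fun j _ =>
        integrable_finset_sum _ fun i _ => (hξεint j i).const_mul _]
      refine Finset.sum_eq_zero fun j _ => ?_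
      rw [integral_finset_sum _ fun i _ => (hξεint j i).const_mul _]
      refine Finset.sum_eq_zero fun i _ => ?_
      rw [integral_const_mul, hξε, mul_zero]
    have J3 : ∫ ω, ∑ i, ∑ i', (e i * e i') * (ε ω i * ε ω i') ∂P = σ ^ 2 * ∑ i, e i ^ 2 := by
      rw [integral_finset_sum _ fun i _ =>
        integrable_finset_sum _ fun i' _ => (hεint i i').const_mul _]
      rw [Finset.mul_sum]
      refine Finset.sum_congr rfl fun i _ => ?_
      rw [integral_finset_sum _ fun i' _ => (hεint i i').const_mul _]
      have : ∀ i', ∫ ω, (e i * e i') * (ε ω i * ε ω i') ∂P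
          = (e i * e i') * (if i = i' then σ ^ 2 else 0) := by
        intro i'; rw [integral_const_mul, hεcov]
      simp [this, mul_ite, Finset.sum_ite_eq, sq]
      ring
    rw [J1, J2, J3]; ring

lemma matrix_alg {K M : ℕ} (Λ : Matrix (Fin K) (Fin K) ℝ) (Ψ : Matrix (Fin M) (Fin K) ℝ)
    (σ : ℝ) (hΛ : Λᵀ = Λ)
    (hunit : IsUnit (Ψ * Λ * Ψᵀ + σ ^ 2 • (1 : Matrix (Fin M) (Fin M) ℝ)).det) :
    Matrix.trace ((1 - (Λ * Ψᵀ * (Ψ * Λ * Ψᵀ + σ ^ 2 • 1)⁻¹) * Ψ) * Λ *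
        (1 - (Λ * Ψᵀ * (Ψ * Λ * Ψᵀ + σ ^ 2 • 1)⁻¹) * Ψ)ᵀ)
      + σ ^ 2 * Matrix.trace ((Λ * Ψᵀ * (Ψ * Λ * Ψᵀ + σ ^ 2 • 1)⁻¹) *
          (Λ * Ψᵀ * (Ψ * Λ * Ψᵀ + σ ^ 2 • 1)⁻¹)ᵀ)
      = Matrix.trace Λ
        - Matrix.trace (Λ * Ψᵀ * (Ψ * Λ * Ψᵀ + σ ^ 2 • 1)⁻¹ * Ψ * Λ) := by
  set Γ : Matrix (Fin M) (Fin M) ℝ := Ψ * Λ * Ψᵀ + σ ^ 2 • 1 with hΓdef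
  set A : Matrix (Fin K) (Fin M) ℝ := Λ * Ψᵀ * Γ⁻¹ with hAdef
  have hΓT : Γᵀ = Γ := by
    rw [hΓdef, transpose_add, transpose_smul, transpose_one, transpose_mul, transpose_mul,
      transpose_transpose, hΛ, Matrix.mul_assoc]
  have hAT : Aᵀ = Γ⁻¹ * Ψ * Λ := by
    rw [hAdef, transpose_mul, transpose_mul, transpose_nonsing_inv, hΓT, hΛ,
      transpose_transpose, Matrix.mul_assoc]
  have hAΓ : A * Γ = Λ * Ψᵀ := by
    rw [hAdef, Matrix.mul_assoc, Matrix.nonsing_inv_mul Γ hunit, Matrix.mul_one]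
  have key : A * Γ * Aᵀ = A * Ψ * Λ := by
    rw [hAΓ, hAT]
    rw [hAdef]
    simp only [Matrix.mul_assoc]
  -- combine the quadratic terms
  have comb : (A * Ψ) * Λ * (A * Ψ)ᵀ + σ ^ 2 • (A * Aᵀ) = A * Γ * Aᵀ := by
    rw [hΓdef, Matrix.mul_add, Matrix.add_mul]
    congr 1
    · rw [transpose_mul]
      simp only [Matrix.mul_assoc]
    · rw [Matrix.mul_smul, Matrix.smul_mul, Matrix.mul_one]
  have expand : (1 - A * Ψ) * Λ * (1 - A * Ψ)ᵀ
      = Λ - Λ * (A * Ψ)ᵀ - (A * Ψ) * Λ + (A * Ψ) * Λ * (A * Ψ)ᵀ := by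
    rw [transpose_sub, transpose_one, Matrix.sub_mul, Matrix.one_mul, Matrix.mul_sub,
      Matrix.mul_one, Matrix.sub_mul]
    abel
  have htr : Matrix.trace (Λ * (A * Ψ)ᵀ) = Matrix.trace ((A * Ψ) * Λ) := by
    rw [← Matrix.trace_transpose (Λ * (A * Ψ)ᵀ), transpose_mul, transpose_transpose, hΛ]
  have htr2 : Matrix.trace ((A * Ψ) * Λ) = Matrix.trace (A * Ψ * Λ) := rfl
  rw [expand]
  rw [Matrix.trace_add, Matrix.trace_sub, Matrix.trace_sub, htr]
  have : σ ^ 2 * Matrix.trace (A * Aᵀ) = Matrix.trace (σ ^ 2 • (A * Aᵀ)) := by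
    rw [Matrix.trace_smul]; simp
  rw [this]
  have final : Matrix.trace ((A * Ψ) * Λ * (A * Ψ)ᵀ) + Matrix.trace (σ ^ 2 • (A * Aᵀ))
      = Matrix.trace (A * Ψ * Λ) := by
    rw [← Matrix.trace_add, comb, key]
  have hgoal : Matrix.trace (A * Ψ * Λ) = Matrix.trace (Λ * Ψᵀ * Γ⁻¹ * Ψ * Λ) := by
    rw [hAdef]
  linarith [final, hgoal]

/-- The expected integrated squared error of the best-linear (conditional-mean style)
reconstruction `X̃` of the rank-`K` random signal `X` from noisy samples `s = m + Ψξ + ε`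
equals `trace(Λ) − trace(ΛΨᵀΓ⁻¹ΨΛ)`, where `Γ = ΨΛΨᵀ + σ²I`. -/
theorem expected_ISE_identity
    {Ω : Type*} [MeasurableSpace Ω] (μ : Measure Ω)
    {Ω' : Type*} [MeasurableSpace Ω'] (P : Measure Ω') [IsProbabilityMeasure P]
    {K M : ℕ} (ψ : Fin K → Ω → ℝ)
    (hψmeas : ∀ k, Measurable (ψ k))
    (hψint : ∀ j k, Integrable (fun p => ψ j p * ψ k p) μ)
    (hψortho : ∀ j k, ∫ p, ψ j p * ψ k p ∂μ = if j = k then (1 : ℝ) else 0)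
    (ρ : Fin K → ℝ) (hρ : ∀ k, 0 ≤ ρ k) (σ : ℝ) (hσ : 0 < σ)
    (ξ : Ω' → Fin K → ℝ) (ε : Ω' → Fin M → ℝ)
    (hξmeas : ∀ k, Measurable fun ω => ξ ω k)
    (hεmeas : ∀ i, Measurable fun ω => ε ω i)
    (hξint1 : ∀ k, Integrable (fun ω => ξ ω k) P)
    (hεint1 : ∀ i, Integrable (fun ω => ε ω i) P)
    (hξint : ∀ j k, Integrable (fun ω => ξ ω j * ξ ω k) P)
    (hεint : ∀ i j, Integrable (fun ω => ε ω i * ε ω j) P)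
    (hξεint : ∀ k i, Integrable (fun ω => ξ ω k * ε ω i) P)
    (hξmean : ∀ k, ∫ ω, ξ ω k ∂P = 0)
    (hεmean : ∀ i, ∫ ω, ε ω i ∂P = 0)
    (hξcov : ∀ j k, ∫ ω, ξ ω j * ξ ω k ∂P = Matrix.diagonal ρ j k)
    (hεcov : ∀ i j, ∫ ω, ε ω i * ε ω j ∂P = if i = j then σ ^ 2 else 0)
    (hξε : ∀ k i, ∫ ω, ξ ω k * ε ω i ∂P = 0)
    (mvec : Fin M → ℝ) (Ψ : Matrix (Fin M) (Fin K) ℝ) (μ₀ : Ω → ℝ) :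
    (∫ ω, ∫ p,
        ((μ₀ p + ∑ k, ξ ω k * ψ k p) -
          (μ₀ p + ∑ k,
            ((Matrix.diagonal ρ * Ψᵀ *
                (Ψ * Matrix.diagonal ρ * Ψᵀ + σ ^ 2 • 1)⁻¹).mulVec
              ((mvec + Ψ.mulVec (ξ ω) + ε ω) - mvec)) k * ψ k p)) ^ 2 ∂μ ∂P)
      = Matrix.trace (Matrix.diagonal ρ) -
        Matrix.trace (Matrix.diagonal ρ * Ψᵀ *
          (Ψ * Matrix.diagonal ρ * Ψᵀ + σ ^ 2 • 1)⁻¹ * Ψ * Matrix.diagonal ρ) := by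
  classical
  set Λ : Matrix (Fin K) (Fin K) ℝ := Matrix.diagonal ρ with hΛdef
  set Γ : Matrix (Fin M) (Fin M) ℝ := Ψ * Λ * Ψᵀ + σ ^ 2 • 1 with hΓdef
  set A : Matrix (Fin K) (Fin M) ℝ := Λ * Ψᵀ * Γ⁻¹ with hAdef
  have hΛsym : Λᵀ = Λ := Matrix.diagonal_transpose ρ
  have hps : Λ.PosSemidef := Matrix.posSemidef_diagonal_iff.mpr hρ
  have h1 : (Ψ * Λ * Ψᵀ).PosSemidef := by
    have := hps.mul_mul_conjTranspose_same Ψ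
    rwa [Matrix.conjTranspose_eq_transpose_of_trivial] at this
  have h2 : ((σ ^ 2) • (1 : Matrix (Fin M) (Fin M) ℝ)).PosDef := by
    rw [Matrix.smul_one_eq_diagonal]
    exact Matrix.posDef_diagonal_iff.mpr fun _ => by positivity
  have hΓpd : Γ.PosDef := Matrix.PosDef.posSemidef_add h1 h2
  have hunit : IsUnit Γ.det := hΓpd.det_pos.ne'.isUnit
  set D : Matrix (Fin K) (Fin K) ℝ := 1 - A * Ψ with hDdef
  have hcoef : ∀ ω k, ξ ω k - (A.mulVec ((mvec + Ψ.mulVec (ξ ω) + ε ω) - mvec)) k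
      = ∑ j, D k j * ξ ω j + ∑ i, (-A) k i * ε ω i := by
    intro ω k
    have hms : (mvec + Ψ.mulVec (ξ ω) + ε ω) - mvec = Ψ.mulVec (ξ ω) + ε ω := by abel
    rw [hms]
    have hswap : ∑ i, A k i * ∑ j, Ψ i j * ξ ω j = ∑ j, (∑ i, A k i * Ψ i j) * ξ ω j := by
      simp_rw [Finset.mul_sum, Finset.sum_mul, ← mul_assoc]
      rw [Finset.sum_comm]
    simp only [hDdef, Matrix.mulVec, dotProduct, Pi.add_apply, Matrix.sub_apply,
      Matrix.one_apply, Matrix.neg_apply, mul_add, sub_mul, ite_mul, one_mul, zero_mul,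
      neg_mul, Matrix.mul_apply, Finset.sum_add_distrib, Finset.sum_sub_distrib,
      Finset.sum_neg_distrib, Finset.sum_ite_eq, Finset.mem_univ, if_true]
    rw [hswap]
    ring
  have hinner : ∀ ω, (∫ p,
        ((μ₀ p + ∑ k, ξ ω k * ψ k p) -
          (μ₀ p + ∑ k,
            (A.mulVec ((mvec + Ψ.mulVec (ξ ω) + ε ω) - mvec)) k * ψ k p)) ^ 2 ∂μ)
      = ∑ k, (∑ j, D k j * ξ ω j + ∑ i, (-A) k i * ε ω i) ^ 2 := by
    intro ω
    have hpt : ∀ p, ((μ₀ p + ∑ k, ξ ω k * ψ k p) -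
          (μ₀ p + ∑ k,
            (A.mulVec ((mvec + Ψ.mulVec (ξ ω) + ε ω) - mvec)) k * ψ k p))
        = ∑ k, (∑ j, D k j * ξ ω j + ∑ i, (-A) k i * ε ω i) * ψ k p := by
      intro p
      rw [add_sub_add_left_eq_sub, ← Finset.sum_sub_distrib]
      exact Finset.sum_congr rfl fun k _ => by rw [← sub_mul, hcoef ω k]
    simp_rw [hpt]
    exact inner_int μ ψ hψint hψortho _
  simp_rw [hinner]
  rw [integral_finset_sum _ fun k _ =>
    (second_moment P ρ σ ξ ε hξint hεint hξεint hξcov hεcov hξε (fun j => D k j)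
      (fun i => (-A) k i)).1]
  have hval : ∀ k, ∫ ω, (∑ j, D k j * ξ ω j + ∑ i, (-A) k i * ε ω i) ^ 2 ∂P
      = (∑ j, D k j ^ 2 * ρ j) + σ ^ 2 * ∑ i, (-A) k i ^ 2 := fun k =>
    (second_moment P ρ σ ξ ε hξint hεint hξεint hξcov hεcov hξε _ _).2
  simp_rw [hval]
  have htr1 : ∑ k, ∑ j, D k j ^ 2 * ρ j = Matrix.trace (D * Λ * Dᵀ) := by
    simp only [Matrix.trace, Matrix.diag, Matrix.mul_apply, Matrix.transpose_apply, hΛdef,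
      Matrix.diagonal_apply, mul_ite, mul_zero, ite_mul, zero_mul, Finset.sum_ite_eq,
      Finset.sum_ite_eq', Finset.mem_univ, if_true]
    refine Finset.sum_congr rfl fun k _ => Finset.sum_congr rfl fun j _ => by ring
  have htr2 : ∑ k, (σ ^ 2 * ∑ i, (-A) k i ^ 2) = σ ^ 2 * Matrix.trace (A * Aᵀ) := by
    simp only [Matrix.trace, Matrix.diag, Matrix.mul_apply, Matrix.transpose_apply,
      Matrix.neg_apply, Finset.mul_sum]
    exact Finset.sum_congr rfl fun k _ => Finset.sum_congr rfl fun i _ => by ring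
  rw [Finset.sum_add_distrib, htr1, htr2]
  exact matrix_alg Λ Ψ σ hΛsym hunit
end

section
/- Let Λ = diag(ρ₁,…,ρ_K) with ρ_k ≥ 0 and σ > 0, and for Ψ ∈ ℝ^{M×K} let Γ(Ψ) = ΨΛΨᵀ + σ² I_M and g(Ψ) = trace(ΛΨᵀΓ(Ψ)⁻¹ΨΛ). Let (Ω, μ), ψ₁,…,ψ_K, ξ, ε, s, and the reconstruction X̃ be as follows: ψ₁,…,ψ_K are orthonormal in L²(μ); ξ ∈ ℝ^K is a random vector with mean 0 and covariance Λ; ε ∈ ℝ^M has mean 0, covariance σ² I_M, and is uncorrelated with ξ; s = m + Ψξ + ε; X(p) = μ₀(p) + Σ_k ξ_k ψ_k(p); and X̃_Ψ(p) = μ₀(p) + Σ_k (ΛΨᵀΓ(Ψ)⁻¹(s − m))_k ψ_k(p). Then for any two designs Ψ₁ ∈ ℝ^{M×K} and Ψ₂ ∈ ℝ^{M×K} (with their respective observation vectors generated by the same model), E[∫(X − X̃_{Ψ₁})² dμ] ≤ E[∫(X − X̃_{Ψ₂})² dμ] if and only if g(Ψ₁) ≥ g(Ψ₂). In particular, a design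 minimizes the expected integrated squared error of the conditional-mean reconstruction if and only if it maximizes g. -/
open Matrix MeasureTheory

/-- The design objective `g(Ψ) = trace(ΛΨᵀ(ΨΛΨᵀ + σ²I)⁻¹ΨΛ)`. -/
noncomputable def gObj {M K : ℕ} (ρ : Fin K → ℝ) (σ : ℝ)
    (Ψ : Matrix (Fin M) (Fin K) ℝ) : ℝ :=
  Matrix.trace (Matrix.diagonal ρ * Ψᵀ *
    (Ψ * Matrix.diagonal ρ * Ψᵀ + σ ^ 2 • 1)⁻¹ * Ψ * Matrix.diagonal ρ)

/-- The expected integrated squared error `E ∫ (X − X̃_Ψ)² dμ` of the conditional-mean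
reconstruction `X̃_Ψ(p) = μ₀(p) + ∑_k (ΛΨᵀΓ(Ψ)⁻¹(s − m))_k ψ_k(p)` of the signal
`X(p) = μ₀(p) + ∑_k ξ_k ψ_k(p)` from the observations `s = m + Ψξ + ε`. -/
noncomputable def expISE {Ω Ω' : Type*} [MeasurableSpace Ω] [MeasurableSpace Ω']
    (μ : Measure Ω) (P : Measure Ω') {K M : ℕ} (ψ : Fin K → Ω → ℝ) (μ₀ : Ω → ℝ)
    (ρ : Fin K → ℝ) (σ : ℝ) (ξ : Ω' → Fin K → ℝ) (ε : Ω' → Fin M → ℝ)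
    (mvec : Fin M → ℝ) (Ψ : Matrix (Fin M) (Fin K) ℝ) : ℝ :=
  ∫ ω, ∫ p,
      ((μ₀ p + ∑ k, ξ ω k * ψ k p) -
        (μ₀ p + ∑ k,
          ((Matrix.diagonal ρ * Ψᵀ *
              (Ψ * Matrix.diagonal ρ * Ψᵀ + σ ^ 2 • 1)⁻¹).mulVec
            ((mvec + Ψ.mulVec (ξ ω) + ε ω) - mvec)) k * ψ k p)) ^ 2 ∂μ ∂P



lemma sq_sum_integral {Ω : Type*} [MeasurableSpace Ω] (μ : Measure Ω) {K : ℕ}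
    (ψ : Fin K → Ω → ℝ)
    (hψint : ∀ j k, Integrable (fun p => ψ j p * ψ k p) μ)
    (hψortho : ∀ j k, ∫ p, ψ j p * ψ k p ∂μ = if j = k then (1 : ℝ) else 0)
    (c : Fin K → ℝ) :
    ∫ p, (∑ k, c k * ψ k p) ^ 2 ∂μ = ∑ k, (c k) ^ 2 := by
  have h1 : ∀ p, (∑ k, c k * ψ k p) ^ 2 = ∑ j, ∑ k, (c j * c k) * (ψ j p * ψ k p) := by
    intro p
    rw [sq, Finset.sum_mul_sum]
    exact Finset.sum_congr rfl fun j _ => Finset.sum_congr rfl fun k _ => by ring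
  simp_rw [h1]
  rw [integral_finset_sum _ (fun j _ =>
    integrable_finset_sum _ (fun k _ => (hψint j k).const_mul _))]
  simp_rw [integral_finset_sum _ (fun k _ => ((hψint _ k).const_mul _) : ∀ k ∈ Finset.univ, _),
    MeasureTheory.integral_const_mul, hψortho]
  simp [mul_ite, Finset.sum_ite_eq, sq]


lemma moment_lin {Ω' : Type*} [MeasurableSpace Ω'] (P : Measure Ω') {K M : ℕ}
    (ρ : Fin K → ℝ) (σ : ℝ)
    (ξ : Ω' → Fin K → ℝ) (ε : Ω' → Fin M → ℝ)
    (hξint : ∀ j k, Integrable (fun ω => ξ ω j * ξ ω k) P)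
    (hεint : ∀ i j, Integrable (fun ω => ε ω i * ε ω j) P)
    (hξεint : ∀ k i, Integrable (fun ω => ξ ω k * ε ω i) P)
    (hξcov : ∀ j k, ∫ ω, ξ ω j * ξ ω k ∂P = Matrix.diagonal ρ j k)
    (hεcov : ∀ i j, ∫ ω, ε ω i * ε ω j ∂P = if i = j then σ ^ 2 else 0)
    (hξε : ∀ k i, ∫ ω, ξ ω k * ε ω i ∂P = 0)
    (a : Fin K → ℝ) (b : Fin M → ℝ) :
    Integrable (fun ω => (∑ j, a j * ξ ω j + ∑ i, b i * ε ω i) ^ 2) P ∧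
    ∫ ω, (∑ j, a j * ξ ω j + ∑ i, b i * ε ω i) ^ 2 ∂P
      = (∑ j, (a j) ^ 2 * ρ j) + σ ^ 2 * ∑ i, (b i) ^ 2 := by
  have hexp : ∀ ω, (∑ j, a j * ξ ω j + ∑ i, b i * ε ω i) ^ 2
      = (∑ j, ∑ k, (a j * a k) * (ξ ω j * ξ ω k))
        + 2 * (∑ j, ∑ i, (a j * b i) * (ξ ω j * ε ω i))
        + (∑ i, ∑ i', (b i * b i') * (ε ω i * ε ω i')) := by
    intro ω
    have e1 : (∑ j, a j * ξ ω j) * (∑ k, a k * ξ ω k)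
        = ∑ j, ∑ k, (a j * a k) * (ξ ω j * ξ ω k) := by
      rw [Finset.sum_mul_sum]
      exact Finset.sum_congr rfl fun j _ => Finset.sum_congr rfl fun k _ => by ring
    have e2 : (∑ j, a j * ξ ω j) * (∑ i, b i * ε ω i)
        = ∑ j, ∑ i, (a j * b i) * (ξ ω j * ε ω i) := by
      rw [Finset.sum_mul_sum]
      exact Finset.sum_congr rfl fun j _ => Finset.sum_congr rfl fun k _ => by ring
    have e3 : (∑ i, b i * ε ω i) * (∑ i', b i' * ε ω i')
        = ∑ i, ∑ i', (b i * b i') * (ε ω i * ε ω i') := by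
      rw [Finset.sum_mul_sum]
      exact Finset.sum_congr rfl fun j _ => Finset.sum_congr rfl fun k _ => by ring
    rw [add_sq, sq, sq, e1, e3, mul_assoc 2, e2]
  have hS1 : Integrable (fun ω => ∑ j, ∑ k, (a j * a k) * (ξ ω j * ξ ω k)) P :=
    integrable_finset_sum _ fun j _ => integrable_finset_sum _ fun k _ =>
      (hξint j k).const_mul _
  have hS2 : Integrable (fun ω => ∑ j, ∑ i, (a j * b i) * (ξ ω j * ε ω i)) P :=
    integrable_finset_sum _ fun j _ => integrable_finset_sum _ fun k _ =>
      (hξεint j k).const_mul _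
  have hS3 : Integrable (fun ω => ∑ i, ∑ i', (b i * b i') * (ε ω i * ε ω i')) P :=
    integrable_finset_sum _ fun j _ => integrable_finset_sum _ fun k _ =>
      (hεint j k).const_mul _
  constructor
  · simp_rw [hexp]
    exact ((hS1.add (hS2.const_mul 2)).add hS3 : Integrable _ P)
  · simp_rw [hexp]
    have hadd : Integrable (fun ω => (∑ j, ∑ k, (a j * a k) * (ξ ω j * ξ ω k))
        + 2 * (∑ j, ∑ i, (a j * b i) * (ξ ω j * ε ω i))) P := hS1.add (hS2.const_mul 2)
    have h2' : Integrable (fun ω => 2 * (∑ j, ∑ i, (a j * b i) * (ξ ω j * ε ω i))) P :=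
      hS2.const_mul 2
    rw [integral_add hadd hS3, integral_add hS1 h2', MeasureTheory.integral_const_mul]
    have i1 : ∫ ω, ∑ j, ∑ k, (a j * a k) * (ξ ω j * ξ ω k) ∂P = ∑ j, (a j) ^ 2 * ρ j := by
      rw [integral_finset_sum _ (fun j _ =>
        integrable_finset_sum _ (fun k _ => (hξint j k).const_mul _))]
      simp_rw [integral_finset_sum _ (fun k _ => ((hξint _ k).const_mul _ : Integrable _ P)),
        MeasureTheory.integral_const_mul, hξcov, Matrix.diagonal_apply]
      simp [mul_ite, Finset.sum_ite_eq, sq]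
    have i2 : ∫ ω, ∑ j, ∑ i, (a j * b i) * (ξ ω j * ε ω i) ∂P = 0 := by
      rw [integral_finset_sum _ (fun j _ =>
        integrable_finset_sum _ (fun k _ => (hξεint j k).const_mul _))]
      simp_rw [integral_finset_sum _ (fun k _ => ((hξεint _ k).const_mul _ : Integrable _ P)),
        MeasureTheory.integral_const_mul, hξε]
      simp
    have i3 : ∫ ω, ∑ i, ∑ i', (b i * b i') * (ε ω i * ε ω i') ∂P = σ ^ 2 * ∑ i, (b i) ^ 2 := by
      rw [integral_finset_sum _ (fun j _ =>
        integrable_finset_sum _ (fun k _ => (hεint j k).const_mul _))]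
      simp_rw [integral_finset_sum _ (fun k _ => ((hεint _ k).const_mul _ : Integrable _ P)),
        MeasureTheory.integral_const_mul, hεcov]
      simp [mul_ite, Finset.sum_ite_eq, sq, Finset.mul_sum]
      exact Finset.sum_congr rfl fun i _ => by ring
    rw [i1, i2, i3]; ring


lemma tr_CDCt {K : ℕ} (ρ : Fin K → ℝ) (C : Matrix (Fin K) (Fin K) ℝ) :
    Matrix.trace (C * Matrix.diagonal ρ * Cᵀ) = ∑ k, ∑ j, (C k j) ^ 2 * ρ j := by
  simp only [Matrix.trace, Matrix.diag_apply, Matrix.mul_apply, Matrix.transpose_apply,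
    Matrix.diagonal_apply, mul_ite, mul_zero, ite_mul, zero_mul, Finset.sum_ite_eq,
    Finset.sum_ite_eq', Finset.mem_univ, if_true]
  exact Finset.sum_congr rfl fun k _ => Finset.sum_congr rfl fun j _ => by ring

lemma tr_AAt {K M : ℕ} (A : Matrix (Fin K) (Fin M) ℝ) :
    Matrix.trace (A * Aᵀ) = ∑ k, ∑ i, (A k i) ^ 2 := by
  simp only [Matrix.trace, Matrix.diag_apply, Matrix.mul_apply, Matrix.transpose_apply]
  exact Finset.sum_congr rfl fun k _ => Finset.sum_congr rfl fun j _ => by ring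
lemma gamma_posdef {M K : ℕ} (ρ : Fin K → ℝ) (hρ : ∀ k, 0 ≤ ρ k) {σ : ℝ} (hσ : 0 < σ)
    (Ψ : Matrix (Fin M) (Fin K) ℝ) :
    (Ψ * Matrix.diagonal ρ * Ψᵀ + σ ^ 2 • (1 : Matrix (Fin M) (Fin M) ℝ)).PosDef := by
  have h1 : (Ψ * Matrix.diagonal ρ * Ψᵀ).PosSemidef := by
    have hd : (Matrix.diagonal ρ).PosSemidef := Matrix.posSemidef_diagonal_iff.mpr hρ
    simpa [Matrix.conjTranspose_eq_transpose_of_trivial] using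
      hd.mul_mul_conjTranspose_same Ψ
  have h2 : (σ ^ 2 • (1 : Matrix (Fin M) (Fin M) ℝ)).PosDef := by
    rw [Matrix.smul_one_eq_diagonal]
    exact Matrix.PosDef.diagonal fun _ => by positivity
  exact Matrix.PosDef.posSemidef_add h1 h2

lemma trace_identity {M K : ℕ} (ρ : Fin K → ℝ) (hρ : ∀ k, 0 ≤ ρ k) {σ : ℝ} (hσ : 0 < σ)
    (Ψ : Matrix (Fin M) (Fin K) ℝ) :
    Matrix.trace (((1 : Matrix (Fin K) (Fin K) ℝ) -
        (Matrix.diagonal ρ * Ψᵀ * (Ψ * Matrix.diagonal ρ * Ψᵀ + σ ^ 2 • 1)⁻¹) * Ψ)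
        * Matrix.diagonal ρ *
        ((1 : Matrix (Fin K) (Fin K) ℝ) -
        (Matrix.diagonal ρ * Ψᵀ * (Ψ * Matrix.diagonal ρ * Ψᵀ + σ ^ 2 • 1)⁻¹) * Ψ)ᵀ)
      + σ ^ 2 * Matrix.trace ((Matrix.diagonal ρ * Ψᵀ * (Ψ * Matrix.diagonal ρ * Ψᵀ + σ ^ 2 • 1)⁻¹)
          * (Matrix.diagonal ρ * Ψᵀ * (Ψ * Matrix.diagonal ρ * Ψᵀ + σ ^ 2 • 1)⁻¹)ᵀ)
      = Matrix.trace (Matrix.diagonal ρ) - gObj ρ σ Ψ := by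
  set Λ : Matrix (Fin K) (Fin K) ℝ := Matrix.diagonal ρ with hΛ
  set Γ : Matrix (Fin M) (Fin M) ℝ := Ψ * Λ * Ψᵀ + σ ^ 2 • 1 with hΓ
  set A : Matrix (Fin K) (Fin M) ℝ := Λ * Ψᵀ * Γ⁻¹ with hA
  have hpd : Γ.PosDef := gamma_posdef ρ hρ hσ Ψ
  have hdet : IsUnit Γ.det := hpd.det_pos.ne'.isUnit
  have hΓT : Γᵀ = Γ := by
    rw [hΓ]
    simp [Matrix.transpose_add, Matrix.transpose_mul, Matrix.diagonal_transpose,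
      Matrix.mul_assoc, hΛ]
  have hinvT : Γ⁻¹ᵀ = Γ⁻¹ := by rw [Matrix.transpose_nonsing_inv, hΓT]
  have hΛT : Λᵀ = Λ := Matrix.diagonal_transpose ρ
  have hAT : Aᵀ = Γ⁻¹ * (Ψ * Λ) := by
    rw [hA, Matrix.transpose_mul, Matrix.transpose_mul, hinvT, Matrix.transpose_transpose, hΛT]
  set G : Matrix (Fin K) (Fin K) ℝ := Λ * Ψᵀ * Γ⁻¹ * Ψ * Λ with hG
  have hg : gObj ρ σ Ψ = Matrix.trace G := rfl
  have e2 : Λ * Ψᵀ * Aᵀ = G := by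
    rw [hAT, hG, Matrix.mul_assoc, Matrix.mul_assoc, Matrix.mul_assoc, Matrix.mul_assoc]
  have e1 : A * Ψ * Λ = G := by rw [hA, hG]
  have e3 : A * Γ * Aᵀ = G := by
    rw [hA, Matrix.mul_assoc (Λ * Ψᵀ), Matrix.nonsing_inv_mul Γ hdet, Matrix.mul_one, e2]
  have e4 : A * Ψ * Λ * Ψᵀ * Aᵀ + σ ^ 2 • (A * Aᵀ) = G := by
    rw [← e3, hΓ]
    rw [Matrix.mul_add, Matrix.add_mul]
    congr 1
    · rw [← Matrix.mul_assoc, ← Matrix.mul_assoc]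
    · rw [Matrix.mul_smul, Matrix.mul_one, Matrix.smul_mul]
  -- expand the first trace
  have expand : ((1 : Matrix (Fin K) (Fin K) ℝ) - A * Ψ) * Λ * ((1 : Matrix (Fin K) (Fin K) ℝ) - A * Ψ)ᵀ
      = Λ - A * Ψ * Λ - Λ * Ψᵀ * Aᵀ + A * Ψ * Λ * Ψᵀ * Aᵀ := by
    rw [Matrix.transpose_sub, Matrix.transpose_one, Matrix.transpose_mul]
    noncomm_ring
    simp [Matrix.mul_assoc]
  rw [expand]
  rw [Matrix.trace_add, Matrix.trace_sub, Matrix.trace_sub, e1, e2, hg]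
  have e5 : Matrix.trace (A * Ψ * Λ * Ψᵀ * Aᵀ) + σ ^ 2 * Matrix.trace (A * Aᵀ)
      = Matrix.trace G := by
    rw [← e4, Matrix.trace_add, Matrix.trace_smul, smul_eq_mul]
  linarith [e5]
lemma expISE_eq
    {Ω : Type*} [MeasurableSpace Ω] (μ : Measure Ω)
    {Ω' : Type*} [MeasurableSpace Ω'] (P : Measure Ω')
    {K M : ℕ} (ψ : Fin K → Ω → ℝ)
    (hψint : ∀ j k, Integrable (fun p => ψ j p * ψ k p) μ)
    (hψortho : ∀ j k, ∫ p, ψ j p * ψ k p ∂μ = if j = k then (1 : ℝ) else 0)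
    (ρ : Fin K → ℝ) (hρ : ∀ k, 0 ≤ ρ k) (σ : ℝ) (hσ : 0 < σ)
    (ξ : Ω' → Fin K → ℝ) (ε : Ω' → Fin M → ℝ)
    (hξint : ∀ j k, Integrable (fun ω => ξ ω j * ξ ω k) P)
    (hεint : ∀ i j, Integrable (fun ω => ε ω i * ε ω j) P)
    (hξεint : ∀ k i, Integrable (fun ω => ξ ω k * ε ω i) P)
    (hξcov : ∀ j k, ∫ ω, ξ ω j * ξ ω k ∂P = Matrix.diagonal ρ j k)
    (hεcov : ∀ i j, ∫ ω, ε ω i * ε ω j ∂P = if i = j then σ ^ 2 else 0)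
    (hξε : ∀ k i, ∫ ω, ξ ω k * ε ω i ∂P = 0)
    (mvec : Fin M → ℝ) (μ₀ : Ω → ℝ) (Ψ : Matrix (Fin M) (Fin K) ℝ) :
    expISE μ P ψ μ₀ ρ σ ξ ε mvec Ψ
      = Matrix.trace (Matrix.diagonal ρ) - gObj ρ σ Ψ := by
  classical
  unfold expISE
  set A : Matrix (Fin K) (Fin M) ℝ :=
    Matrix.diagonal ρ * Ψᵀ * (Ψ * Matrix.diagonal ρ * Ψᵀ + σ ^ 2 • 1)⁻¹ with hA
  set C : Matrix (Fin K) (Fin K) ℝ := 1 - A * Ψ with hC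
  have hvec : ∀ ω, (mvec + Ψ.mulVec (ξ ω) + ε ω) - mvec = Ψ.mulVec (ξ ω) + ε ω := by
    intro ω; abel
  have h1 : ∀ ω p, (μ₀ p + ∑ k, ξ ω k * ψ k p) -
        (μ₀ p + ∑ k, (A.mulVec ((mvec + Ψ.mulVec (ξ ω) + ε ω) - mvec)) k * ψ k p)
      = ∑ k, (ξ ω k - (A.mulVec (Ψ.mulVec (ξ ω) + ε ω)) k) * ψ k p := by
    intro ω p
    rw [hvec, add_sub_add_left_eq_sub, ← Finset.sum_sub_distrib]
    exact Finset.sum_congr rfl fun k _ => (sub_mul _ _ _).symm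
  have hc : ∀ ω k, ξ ω k - (A.mulVec (Ψ.mulVec (ξ ω) + ε ω)) k
      = ∑ j, C k j * ξ ω j + ∑ i, (-(A k i)) * ε ω i := by
    intro ω k
    have swap : ∑ i, A k i * ∑ j, Ψ i j * ξ ω j = ∑ j, (∑ i, A k i * Ψ i j) * ξ ω j := by
      simp_rw [Finset.mul_sum, Finset.sum_mul]
      rw [Finset.sum_comm]
      exact Finset.sum_congr rfl fun j _ => Finset.sum_congr rfl fun i _ => by ring
    simp only [hC, Matrix.mulVec, dotProduct, Pi.add_apply, mul_add,
      Finset.sum_add_distrib, Matrix.sub_apply, Matrix.one_apply, Matrix.mul_apply,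
      sub_mul, Finset.sum_sub_distrib, ite_mul, one_mul, zero_mul, Finset.sum_ite_eq,
      Finset.mem_univ, if_true, neg_mul]
    rw [swap]
    simp only [Finset.sum_neg_distrib]
    ring
  simp_rw [h1, sq_sum_integral μ ψ hψint hψortho, hc]
  rw [integral_finset_sum _ (fun k _ => (moment_lin P ρ σ ξ ε hξint hεint hξεint
    hξcov hεcov hξε (fun j => C k j) (fun i => -(A k i))).1)]
  have hint : ∀ k, ∫ ω, (∑ j, C k j * ξ ω j + ∑ i, (-(A k i)) * ε ω i) ^ 2 ∂P
      = (∑ j, (C k j) ^ 2 * ρ j) + σ ^ 2 * ∑ i, (A k i) ^ 2 := by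
    intro k
    rw [(moment_lin P ρ σ ξ ε hξint hεint hξεint hξcov hεcov hξε
      (fun j => C k j) (fun i => -(A k i))).2]
    simp [neg_sq]
  simp_rw [hint]
  rw [Finset.sum_add_distrib, ← Finset.mul_sum, ← tr_CDCt ρ C, ← tr_AAt A, hC, hA]
  exact trace_identity ρ hρ hσ Ψ

/-- A design `Ψ₁` yields expected integrated squared error no larger than `Ψ₂` if and
only if `g(Ψ₁) ≥ g(Ψ₂)`; in particular, minimizing the expected ISE is equivalent to
maximizing the design objective `g`. -/
theorem ISE_ordering_iff_design_objective_ordering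
    {Ω : Type*} [MeasurableSpace Ω] (μ : Measure Ω)
    {Ω' : Type*} [MeasurableSpace Ω'] (P : Measure Ω') [IsProbabilityMeasure P]
    {K M : ℕ} (ψ : Fin K → Ω → ℝ)
    (hψmeas : ∀ k, Measurable (ψ k))
    (hψint : ∀ j k, Integrable (fun p => ψ j p * ψ k p) μ)
    (hψortho : ∀ j k, ∫ p, ψ j p * ψ k p ∂μ = if j = k then (1 : ℝ) else 0)
    (ρ : Fin K → ℝ) (hρ : ∀ k, 0 ≤ ρ k) (σ : ℝ) (hσ : 0 < σ)
    (ξ : Ω' → Fin K → ℝ) (ε : Ω' → Fin M → ℝ)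
    (hξmeas : ∀ k, Measurable fun ω => ξ ω k)
    (hεmeas : ∀ i, Measurable fun ω => ε ω i)
    (hξint1 : ∀ k, Integrable (fun ω => ξ ω k) P)
    (hεint1 : ∀ i, Integrable (fun ω => ε ω i) P)
    (hξint : ∀ j k, Integrable (fun ω => ξ ω j * ξ ω k) P)
    (hεint : ∀ i j, Integrable (fun ω => ε ω i * ε ω j) P)
    (hξεint : ∀ k i, Integrable (fun ω => ξ ω k * ε ω i) P)
    (hξmean : ∀ k, ∫ ω, ξ ω k ∂P = 0)
    (hεmean : ∀ i, ∫ ω, ε ω i ∂P = 0)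
    (hξcov : ∀ j k, ∫ ω, ξ ω j * ξ ω k ∂P = Matrix.diagonal ρ j k)
    (hεcov : ∀ i j, ∫ ω, ε ω i * ε ω j ∂P = if i = j then σ ^ 2 else 0)
    (hξε : ∀ k i, ∫ ω, ξ ω k * ε ω i ∂P = 0)
    (mvec : Fin M → ℝ) (μ₀ : Ω → ℝ)
    (Ψ₁ Ψ₂ : Matrix (Fin M) (Fin K) ℝ) :
    expISE μ P ψ μ₀ ρ σ ξ ε mvec Ψ₁ ≤ expISE μ P ψ μ₀ ρ σ ξ ε mvec Ψ₂ ↔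
      gObj ρ σ Ψ₂ ≤ gObj ρ σ Ψ₁ := by
  rw [expISE_eq μ P ψ hψint hψortho ρ hρ σ hσ ξ ε hξint hεint hξεint hξcov hεcov hξε
    mvec μ₀ Ψ₁, expISE_eq μ P ψ hψint hψortho ρ hρ σ hσ ξ ε hξint hεint hξεint hξcov hεcov hξε
    mvec μ₀ Ψ₂]
  exact sub_le_sub_iff_left _
end
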